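/- arXiv:2205.10831 — 6 statements merged into one kernel-verified Lean document; each statement's English description precedes it below -/
import Mathlib

section
/- Let U = (U_{≤0}, U_{≥0}) be a stable t-structure on a triangulated category T. Then U is regular if and only if T = U_{≤0} × U_{≥0}, that is: Hom(X, Y) = 0 for all X ∈ U_{≤0}, Y ∈ U_{≥0}, Hom(Y, X) = 0 for all Y ∈ U_{≥0}, X ∈ U_{≤0}, and every object Z of T is isomorphic to X ⊕ Y for some X ∈ U_{≤0} and Y ∈ U_{≥0}. -/
open CategoryTheory Category Limits Pretriangulated Triangulated

namespace TStructurePaper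

variable {C : Type*} [Category C] [Preadditive C] [HasZeroObject C]
  [HasShift C ℤ] [∀ (n : ℤ), (shiftFunctor C n).Additive] [Pretriangulated C]

/-- A t-structure is non-degenerate if every object of `⋂ₙ U_{≤n}` and every object
of `⋂ₙ U_{≥n}` is a zero object. -/
def IsNondegenerate (t : TStructure C) : Prop :=
  (∀ X : C, (∀ n : ℤ, t.le n X) → IsZero X) ∧
  (∀ X : C, (∀ n : ℤ, t.ge n X) → IsZero X)

/-- A t-structure is stable if `Σ U_{≤0} = U_{≤0}`. -/
def IsStable (t : TStructure C) : Prop :=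
  ∀ X : C, t.le 0 X ↔ t.le 0 (X⟦(1 : ℤ)⟧)

/-- A t-structure is hereditary if `Hom(U_{≥0}, U_{≤-2}) = 0`. -/
def IsHereditary (t : TStructure C) : Prop :=
  ∀ ⦃X Y : C⦄, t.ge 0 X → t.le (-2) Y → ∀ f : X ⟶ Y, f = 0

/-- `f` factors through some object satisfying the predicate `P`. -/
def FactorsThrough (P : C → Prop) {X Y : C} (f : X ⟶ Y) : Prop :=
  ∃ (Z : C) (_ : P Z) (u : X ⟶ Z) (v : Z ⟶ Y), f = u ≫ v

/-- A t-structure is regular if any morphism `f : X → Y` with `Y ∈ U_{≤m}` for some `m`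
which factors through an object of `U_{≥n}` for every `n` vanishes, and dually. -/
def IsRegular (t : TStructure C) : Prop :=
  (∀ ⦃X Y : C⦄, (∃ m : ℤ, t.le m Y) → ∀ f : X ⟶ Y,
      (∀ n : ℤ, FactorsThrough (t.ge n) f) → f = 0) ∧
  (∀ ⦃X Y : C⦄, (∃ m : ℤ, t.ge m X) → ∀ f : X ⟶ Y,
      (∀ n : ℤ, FactorsThrough (t.le n) f) → f = 0)

/-- `Hom(U_{≥0}, U_{≤-(d+1)}) = 0`. -/
def HasGlDimAtMost (t : TStructure C) (d : ℕ) : Prop :=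
  ∀ ⦃X Y : C⦄, t.ge 0 X → t.le (-(d + 1)) Y → ∀ f : X ⟶ Y, f = 0

/-- The global dimension of a t-structure, as an element of `ℕ∞`. -/
noncomputable def glDim (t : TStructure C) : ℕ∞ :=
  sInf {e : ℕ∞ | ∃ d : ℕ, e = d ∧ HasGlDimAtMost t d}

/-- `d(U,V) ≤ d`, i.e. `V_{≤m} ⊆ U_{≤0} ⊆ V_{≤m+d}` for some integer `m`. -/
def DistAtMost (u v : TStructure C) (d : ℕ) : Prop :=
  ∃ m : ℤ, (∀ X : C, v.le m X → u.le 0 X) ∧ (∀ X : C, u.le 0 X → v.le (m + d) X)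

/-- The distance between two t-structures, as an element of `ℕ∞`. -/
noncomputable def dist (u v : TStructure C) : ℕ∞ :=
  sInf {e : ℕ∞ | ∃ d : ℕ, e = d ∧ DistAtMost u v d}

/-- Membership of the subcategory `U_ℕ = ⋃_{n ≥ 0} U_{[-n, n]}`. -/
def InUN (t : TStructure C) (X : C) : Prop :=
  ∃ n : ℕ, t.ge (-(n : ℤ)) X ∧ t.le (n : ℤ) X

/-- A t-structure is bounded if `⋃ₙ U_{≤n} = T = ⋃ₙ U_{≥n}`. -/
def IsBounded (t : TStructure C) : Prop :=
  (∀ X : C, ∃ n : ℤ, t.le n X) ∧ (∀ X : C, ∃ n : ℤ, t.ge n X)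

/-- Membership of the heart `U₀ = U_{≤0} ∩ U_{≥0}`. -/
def InHeart (t : TStructure C) (X : C) : Prop :=
  t.le 0 X ∧ t.ge 0 X

/-- Truncation data for a t-structure: functors `τ_{≤n}` right adjoint to the inclusions
`U_{≤n} ↪ T` (with counit `ι`) and functors `τ_{≥n}` left adjoint to the inclusions
`U_{≥n} ↪ T` (with unit `π`). -/
structure TruncData (t : TStructure C) where
  τle (n : ℤ) : C ⥤ C
  τge (n : ℤ) : C ⥤ C
  ι (n : ℤ) : τle n ⟶ 𝟭 C
  π (n : ℤ) : 𝟭 C ⟶ τge n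
  le_mem (n : ℤ) (X : C) : t.le n ((τle n).obj X)
  ge_mem (n : ℤ) (X : C) : t.ge n ((τge n).obj X)
  le_adj (n : ℤ) (A X : C) (hA : t.le n A) :
    Function.Bijective (fun g : A ⟶ (τle n).obj X => g ≫ (ι n).app X)
  ge_adj (n : ℤ) (X B : C) (hB : t.ge n B) :
    Function.Bijective (fun g : (τge n).obj X ⟶ B => (π n).app X ≫ g)

/-- The cohomological functor `Hⁿ = Σⁿ ∘ τ_{≤n} ∘ τ_{≥n}` associated to a t-structure. -/
def TruncData.H {t : TStructure C} (d : TruncData t) (n : ℤ) : C ⥤ C :=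
  d.τge n ⋙ d.τle n ⋙ shiftFunctor C n


lemma zero_of_lt (t : TStructure C) {X Y : C} {a b : ℤ} (ha : t.le a X) (hb : t.ge b Y)
    (hab : a < b) (f : X ⟶ Y) : f = 0 := by
  have hX : t.le 0 (X⟦a⟧) := by
    rw [← t.shift_le a 0 a (add_zero a), ObjectProperty.prop_shift_iff] at ha
    exact ha
  have hY : t.ge 1 (Y⟦a⟧) := by
    rw [← t.shift_ge a (b - a) b (by ring), ObjectProperty.prop_shift_iff] at hb
    exact t.ge_antitone (by omega) _ hb
  have h0 := t.zero' ((shiftFunctor C a).map f) hX hY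
  apply (shiftFunctor C a).map_injective
  rw [h0, Functor.map_zero]

lemma le_all (t : TStructure C) (hs : IsStable t) {a : ℤ} (b : ℤ) {X : C} (h : t.le a X) :
    t.le b X := by
  have step : ∀ (n : ℤ) (Y : C), t.le (n + 1) Y → t.le n Y := by
    intro n Y hY
    rw [← t.shift_le n 0 n (add_zero n), ObjectProperty.prop_shift_iff, hs (Y⟦n⟧)]
    rw [← t.shift_le n 1 (n + 1) rfl, ObjectProperty.prop_shift_iff] at hY
    exact t.le_shift 1 1 0 (by omega) _ hY
  rcases le_or_gt a b with hab | hab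
  · exact t.le_monotone hab _ h
  · obtain ⟨k, hk⟩ : ∃ k : ℕ, a = b + k := ⟨(a - b).toNat, by omega⟩
    subst hk
    clear hab
    induction k with
    | zero => simpa using h
    | succ k ih =>
      apply ih
      apply step
      have e : (b + (k : ℤ)) + 1 = b + ((k + 1 : ℕ) : ℤ) := by push_cast; ring
      rw [e]
      exact h

lemma ge_step (t : TStructure C) (hs : IsStable t) (X : C) (h : t.ge 0 X) : t.ge 1 X := by
  obtain ⟨A, B, hA, hB, f, g, hcon, mem⟩ := t.exists_triangle_zero_one X
  have hf : f = 0 := zero_of_lt t (le_all t hs (-1) hA) h (by omega) f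
  obtain ⟨s, hs'⟩ := Triangle.coyoneda_exact₂ _ (inv_rot_of_distTriang _ mem) (𝟙 A)
    (by dsimp [Triangle.invRotate]; rw [hf]; exact comp_zero)
  have hs0 : s = 0 :=
    zero_of_lt t (le_all t hs 0 hA) (t.ge_shift 1 (-1) 2 (by omega) B hB) (by omega) s
  have hA0 : IsZero A := by
    rw [IsZero.iff_id_eq_zero, hs', hs0]; exact zero_comp
  have : IsIso g := (Triangle.isZero₁_iff_isIso₂ _ mem).1 hA0
  exact (t.ge 1).prop_of_iso (asIso g).symm hB

lemma ge_all (t : TStructure C) (hs : IsStable t) {a : ℤ} (b : ℤ) {X : C} (h : t.ge a X) :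
    t.ge b X := by
  have step : ∀ (n : ℤ) (Y : C), t.ge n Y → t.ge (n + 1) Y := by
    intro n Y hY
    rw [← t.shift_ge n 0 n (add_zero n), ObjectProperty.prop_shift_iff] at hY
    rw [← t.shift_ge n 1 (n + 1) rfl, ObjectProperty.prop_shift_iff]
    exact ge_step t hs _ hY
  rcases le_or_gt b a with hab | hab
  · exact t.ge_antitone hab _ h
  · obtain ⟨k, hk⟩ : ∃ k : ℕ, b = a + k := ⟨(b - a).toNat, by omega⟩
    subst hk
    clear hab
    induction k with
    | zero => simpa using h
    | succ k ih =>
      have e : a + ((k + 1 : ℕ) : ℤ) = (a + (k : ℤ)) + 1 := by push_cast; ring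
      rw [e]
      exact step _ _ ih

/-- A stable t-structure `U` is regular if and only if `T = U_{≤0} × U_{≥0}`. -/
theorem statement2 (t : TStructure C) (hs : IsStable t) :
    IsRegular t ↔
      ((∀ ⦃X Y : C⦄, t.le 0 X → t.ge 0 Y → ∀ f : X ⟶ Y, f = 0) ∧
       (∀ ⦃Y X : C⦄, t.ge 0 Y → t.le 0 X → ∀ f : Y ⟶ X, f = 0) ∧
       (∀ Z : C, ∃ (X Y : C) (_ : t.le 0 X) (_ : t.ge 0 Y), Nonempty (Z ≅ X ⊞ Y))) := by
  have homLG : ∀ ⦃X Y : C⦄, t.le 0 X → t.ge 0 Y → ∀ f : X ⟶ Y, f = 0 := fun X Y hX hY f =>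
    zero_of_lt t (le_all t hs (-1) hX) hY (by omega) f
  constructor
  · rintro ⟨h1, -⟩
    have homGL : ∀ ⦃Y X : C⦄, t.ge 0 Y → t.le 0 X → ∀ f : Y ⟶ X, f = 0 := fun Y X hY hX f =>
      h1 ⟨0, hX⟩ f (fun n => ⟨Y, ge_all t hs n hY, 𝟙 Y, f, (id_comp f).symm⟩)
    refine ⟨homLG, homGL, fun Z => ?_⟩
    obtain ⟨X, Y, hX, hY, f, g, h, mem⟩ := t.exists_triangle_zero_one Z
    have h0 : h = 0 := homGL (t.ge_one_le _ hY)
      (le_all t hs 0 (t.le_shift 0 1 (-1) (by omega) X hX)) h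
    obtain ⟨e, -, -⟩ := exists_iso_binaryBiproduct_of_distTriang _ mem h0
    exact ⟨X, Y, hX, t.ge_one_le _ hY, ⟨e⟩⟩
  · rintro ⟨-, hGL, -⟩
    constructor
    · rintro X Y ⟨m, hm⟩ f hfac
      obtain ⟨Z, hZ, u, v, rfl⟩ := hfac 0
      rw [hGL hZ (le_all t hs 0 hm) v, comp_zero]
    · rintro X Y ⟨m, hm⟩ f hfac
      obtain ⟨Z, hZ, u, v, rfl⟩ := hfac 0
      rw [hGL (ge_all t hs 0 hm) hZ u, zero_comp]

end TStructurePaper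
end

section
/- A t-structure U on a triangulated category T is hereditary if and only if every object Z of T is isomorphic to X ⊕ Y for some X ∈ U_{≤0} and some Y ∈ U_{≥1}. -/
open CategoryTheory Category Limits Pretriangulated Triangulated

namespace TStructurePaper

variable {C : Type*} [Category C] [Preadditive C] [HasZeroObject C]
  [HasShift C ℤ] [∀ (n : ℤ), (shiftFunctor C n).Additive] [Pretriangulated C]

/-- Auxiliary lemma: if every object splits, then any map from `GE 1` to `LE (-1)`
vanishes. -/
lemma key_statement4 (t : TStructure C)
    (H : ∀ Z : C, ∃ (X Y : C) (_ : t.le 0 X) (_ : t.ge 1 Y), Nonempty (Z ≅ X ⊞ Y))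
    {B A' : C} (hB : t.ge 1 B) (hA' : t.le (-1) A') (g : B ⟶ A') : g = 0 := by
  set A : C := A'⟦(-1 : ℤ)⟧ with hAdef
  have hA : t.le 0 A := t.le_shift (-1) (-1) 0 (by omega) A' hA'
  set e : A⟦(1 : ℤ)⟧ ≅ A' := (shiftFunctorCompIsoId C (-1 : ℤ) 1 (by omega)).app A' with hedef
  set h : B ⟶ A⟦(1 : ℤ)⟧ := g ≫ e.inv with hhdef
  obtain ⟨Z, a, b, hT⟩ := Pretriangulated.distinguished_cocone_triangle₂ h
  obtain ⟨X, Y, hX, hY, ⟨ε⟩⟩ := H Z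
  suffices hh : h = 0 by
    have : g = h ≫ e.hom := by simp [hhdef]
    rw [this, hh, zero_comp]
  set pY : Z ⟶ Y := ε.hom ≫ biprod.snd with hpYdef
  set iY : Y ⟶ Z := biprod.inr ≫ ε.inv with hiYdef
  have hiYpY : iY ≫ pY = 𝟙 Y := by simp [hiYdef, hpYdef]
  have h1 : a ≫ pY = 0 := t.zero' _ hA hY
  obtain ⟨q, hq⟩ : ∃ q : B ⟶ Y, pY = b ≫ q :=
    Pretriangulated.Triangle.yoneda_exact₂ _ hT pY h1
  set bY : Y ⟶ B := iY ≫ b with hbYdef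
  have hXb : (biprod.inl ≫ ε.inv) ≫ b = 0 := t.zero' _ hX hB
  have hb : b = pY ≫ bY := by
    have hcomp : ε.inv ≫ b = biprod.snd ≫ bY := by
      apply biprod.hom_ext'
      · rw [← assoc, hXb, biprod.inl_snd_assoc, zero_comp]
      · rw [← assoc, biprod.inr_snd_assoc, hbYdef, hiYdef, assoc]
    calc b = ε.hom ≫ (ε.inv ≫ b) := by simp
    _ = ε.hom ≫ biprod.snd ≫ bY := by rw [hcomp]
    _ = pY ≫ bY := by rw [hpYdef, assoc]
  have hbq : bY ≫ q = 𝟙 Y := by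
    have h2 := hiYpY
    rw [hq, ← assoc] at h2
    exact h2
  have hbu : b ≫ (𝟙 B - q ≫ bY) = 0 := by
    have h3 : bY ≫ q ≫ bY = bY := by rw [← assoc, hbq, id_comp]
    rw [hb]
    simp only [Preadditive.comp_sub, comp_id, assoc, h3, sub_self]
  obtain ⟨w, hw⟩ : ∃ w : A⟦(1 : ℤ)⟧ ⟶ B, 𝟙 B - q ≫ bY = h ≫ w :=
    Pretriangulated.Triangle.yoneda_exact₃ _ hT _ hbu
  have hw0 : w = 0 :=
    t.zero' w (t.le_monotone (show (-1 : ℤ) ≤ 0 by omega) _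
      (t.le_shift 0 1 (-1) (by omega) A hA)) hB
  rw [hw0, comp_zero, sub_eq_zero] at hw
  have hqb : q ≫ bY = 𝟙 B := hw.symm
  haveI : IsIso bY := ⟨q, hbq, hqb⟩
  haveI : IsSplitEpi pY := IsSplitEpi.mk' ⟨iY, hiYpY⟩
  haveI : Epi b := by rw [hb]; exact epi_comp _ _
  exact Pretriangulated.Triangle.mor₃_eq_zero_of_epi₂ _ hT this

/-- A t-structure `U` is hereditary if and only if every object `Z` is
isomorphic to `X ⊕ Y` for some `X ∈ U_{≤0}` and `Y ∈ U_{≥1}`. -/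
theorem statement4 (t : TStructure C) :
    IsHereditary t ↔
      ∀ Z : C, ∃ (X Y : C) (_ : t.le 0 X) (_ : t.ge 1 Y), Nonempty (Z ≅ X ⊞ Y) := by
  constructor
  · intro h Z
    obtain ⟨X, Y, hX, hY, f, g, δ, hT⟩ := t.exists_triangle_zero_one Z
    have hδ : δ = 0 := by
      have h1 : t.ge 0 (Y⟦(1 : ℤ)⟧) := t.ge_shift 1 1 0 (by omega) Y hY
      have h2 : t.le (-2) ((X⟦(1 : ℤ)⟧)⟦(1 : ℤ)⟧) :=
        t.le_shift (-1) 1 (-2) (by omega) _ (t.le_shift 0 1 (-1) (by omega) X hX)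
      have := h h1 h2 ((shiftFunctor C (1 : ℤ)).map δ)
      exact (shiftFunctor C (1 : ℤ)).map_eq_zero_iff.mp this
    obtain ⟨e, _, _⟩ :=
      Pretriangulated.exists_iso_binaryBiproduct_of_distTriang _ hT hδ
    exact ⟨X, Y, hX, hY, ⟨e⟩⟩
  · intro H X Y hX hY f
    have hB : t.ge 1 (X⟦(-1 : ℤ)⟧) := t.ge_shift 0 (-1) 1 (by omega) X hX
    have hA : t.le (-1) (Y⟦(-1 : ℤ)⟧) := t.le_shift (-2) (-1) (-1) (by omega) Y hY
    have := key_statement4 t H hB hA ((shiftFunctor C (-1 : ℤ)).map f)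
    exact (shiftFunctor C (-1 : ℤ)).map_eq_zero_iff.mp this

end TStructurePaper
end

section
/- Let U be a hereditary, non-degenerate t-structure on a triangulated category T satisfying the following condition: for every family {Aₙ | n ∈ ℤ} of objects of the heart U₀, the coproduct ∐_{n∈ℤ} Σ⁻ⁿAₙ and the product ∏_{n∈ℤ} Σ⁻ⁿAₙ exist in T, and the canonical morphism ∐_{n∈ℤ} Σ⁻ⁿAₙ → ∏_{n∈ℤ} Σ⁻ⁿAₙ is an isomorphism. Then every object Z of T is isomorphic to ∐_{n∈ℤ} Σ⁻ⁿHⁿ(Z). -/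
open CategoryTheory Category Limits Pretriangulated Triangulated

namespace TStructurePaper

variable {C : Type*} [Category C] [Preadditive C] [HasZeroObject C]
  [HasShift C ℤ] [∀ (n : ℤ), (shiftFunctor C n).Additive] [Pretriangulated C]

section Aux

variable {t : TStructure C}

lemma zero_of_le_ge {a b : ℤ} (hab : a < b) {X Y : C} (hX : t.le a X) (hY : t.ge b Y)
    (f : X ⟶ Y) : f = 0 := by
  apply (shiftFunctor C a).map_injective
  rw [Functor.map_zero]
  exact t.zero' ((shiftFunctor C a).map f) (t.le_shift a a 0 (add_zero a) X hX)
    (t.ge_antitone (show (1:ℤ) ≤ b - a by omega) _ (t.ge_shift b a (b - a) (by omega) Y hY))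

lemma zero_of_her (hher : IsHereditary t) {a b : ℤ} (hab : b + 2 ≤ a) {X Y : C}
    (hX : t.ge a X) (hY : t.le b Y) (f : X ⟶ Y) : f = 0 := by
  apply (shiftFunctor C a).map_injective
  rw [Functor.map_zero]
  exact hher (t.ge_shift a a 0 (add_zero a) X hX)
    (t.le_monotone (show b - a ≤ (-2:ℤ) by omega) _ (t.le_shift b a (b - a) (by omega) Y hY)) _

lemma tri_mor2_inj {T : Triangle C} (hT : T ∈ distTriang C) {b c : ℤ} (hbc : b ≤ c)
    (h1 : t.le b T.obj₁) {V : C} (hV : t.ge c V) {x y : T.obj₃ ⟶ V}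
    (h : T.mor₂ ≫ x = T.mor₂ ≫ y) : x = y := by
  have h0 : T.mor₂ ≫ (x - y) = 0 := by rw [Preadditive.comp_sub, h, sub_self]
  obtain ⟨g, hg⟩ := Triangle.yoneda_exact₃ _ hT _ h0
  have hg0 : g = 0 := zero_of_le_ge (show b - 1 < c by omega)
    (t.le_shift b 1 (b-1) (by omega) _ h1) hV g
  rw [hg0, comp_zero] at hg
  exact sub_eq_zero.1 hg

lemma tri_mor1_inj {T : Triangle C} (hT : T ∈ distTriang C) {b c : ℤ} (hbc : b ≤ c)
    (h3 : t.ge c T.obj₃) {V : C} (hV : t.le b V) {x y : V ⟶ T.obj₁}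
    (h : x ≫ T.mor₁ = y ≫ T.mor₁) : x = y := by
  have h0 : (x - y) ≫ T.mor₁ = 0 := by rw [Preadditive.sub_comp, h, sub_self]
  obtain ⟨g, hg⟩ := Triangle.coyoneda_exact₂ _ (inv_rot_of_distTriang _ hT) (x - y) h0
  have hg0 : g = 0 := zero_of_le_ge (show b < c + 1 by omega) hV
    (t.ge_shift c (-1) (c+1) (by omega) _ h3) g
  rw [hg0, zero_comp] at hg
  exact sub_eq_zero.1 hg

variable (d : TruncData t)

lemma le_ext (n : ℤ) {A X : C} (hA : t.le n A) {g g' : A ⟶ (d.τle n).obj X}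
    (h : g ≫ (d.ι n).app X = g' ≫ (d.ι n).app X) : g = g' := (d.le_adj n A X hA).1 h

lemma le_lift (n : ℤ) {A X : C} (hA : t.le n A) (f : A ⟶ X) :
    ∃ g : A ⟶ (d.τle n).obj X, g ≫ (d.ι n).app X = f := (d.le_adj n A X hA).2 f

lemma ge_ext (n : ℤ) {X B : C} (hB : t.ge n B) {g g' : (d.τge n).obj X ⟶ B}
    (h : (d.π n).app X ≫ g = (d.π n).app X ≫ g') : g = g' := (d.ge_adj n X B hB).1 h

lemma ge_desc (n : ℤ) {X B : C} (hB : t.ge n B) (f : X ⟶ B) :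
    ∃ g : (d.τge n).obj X ⟶ B, (d.π n).app X ≫ g = f := (d.ge_adj n X B hB).2 f

/-- The unit `π : X ⟶ τ≥n X` fits into a distinguished triangle with first object in `LE (n-1)`. -/
lemma ge_triangle (n : ℤ) (X : C) :
    ∃ (A : C) (_ : t.le (n-1) A) (F : A ⟶ X) (H : (d.τge n).obj X ⟶ A⟦(1:ℤ)⟧),
      Triangle.mk F ((d.π n).app X) H ∈ distTriang C := by
  obtain ⟨A, B, hA, hB, F, G, H, mem⟩ := t.exists_triangle X (n-1) n (by omega)
  obtain ⟨u, hu⟩ : ∃ u : B ⟶ (d.τge n).obj X, (d.π n).app X = G ≫ u :=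
    Triangle.yoneda_exact₂ _ mem ((d.π n).app X)
    (zero_of_le_ge (show n - 1 < n by omega) hA (d.ge_mem n X) _)
  obtain ⟨v, hv⟩ := ge_desc d n hB G
  have huv : u ≫ v = 𝟙 B := by
    apply tri_mor2_inj mem (show n-1 ≤ n by omega) hA hB
    dsimp only [Triangle.mk]
    rw [← assoc, ← hu, hv, comp_id]
  have hvu : v ≫ u = 𝟙 ((d.τge n).obj X) := by
    apply ge_ext d n (d.ge_mem n X)
    rw [comp_id, ← assoc, hv, ← hu]
  have : IsIso v := ⟨u, hvu, huv⟩
  refine ⟨A, hA, F, v ≫ H, isomorphic_distinguished _ mem _ ?_⟩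
  refine Triangle.isoMk _ _ (Iso.refl A) (Iso.refl X) (asIso v : (d.τge n).obj X ≅ B) ?_ ?_ ?_
  · show F ≫ 𝟙 X = 𝟙 A ≫ F; simp
  · show (d.π n).app X ≫ v = 𝟙 X ≫ G; rw [id_comp, hv]
  · show (v ≫ H) ≫ (shiftFunctor C (1:ℤ)).map (𝟙 A) = v ≫ H; simp

/-- The counit `ι : τ≤n X ⟶ X` fits into a distinguished triangle with third object
in `GE (n+1)`. -/
lemma le_triangle (n : ℤ) (X : C) :
    ∃ (B : C) (_ : t.ge (n+1) B) (G : X ⟶ B) (H : B ⟶ ((d.τle n).obj X)⟦(1:ℤ)⟧),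
      Triangle.mk ((d.ι n).app X) G H ∈ distTriang C := by
  obtain ⟨A, B, hA, hB, F, G, H, mem⟩ := t.exists_triangle X n (n+1) rfl
  obtain ⟨v, hv⟩ : ∃ v : (d.τle n).obj X ⟶ A, (d.ι n).app X = v ≫ F :=
    Triangle.coyoneda_exact₂ _ mem ((d.ι n).app X)
    (zero_of_le_ge (show n < n + 1 by omega) (d.le_mem n X) hB _)
  obtain ⟨a, ha⟩ := le_lift d n hA F
  have hva : v ≫ a = 𝟙 ((d.τle n).obj X) := by
    apply le_ext d n (d.le_mem n X)
    rw [assoc, ha, ← hv, id_comp]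
  have hav : a ≫ v = 𝟙 A := by
    apply tri_mor1_inj mem (show n ≤ n+1 by omega) hB hA
    dsimp only [Triangle.mk]
    rw [assoc, ← hv, ha, id_comp]
  have : IsIso a := ⟨v, hav, hva⟩
  refine ⟨B, hB, G, H ≫ (shiftFunctor C (1:ℤ)).map a,
    isomorphic_distinguished _ mem _ ?_⟩
  refine Triangle.isoMk _ _ (asIso a).symm (Iso.refl X) (Iso.refl B) ?_ ?_ ?_
  · show (d.ι n).app X ≫ 𝟙 ((𝟭 C).obj X) = inv a ≫ F
    rw [comp_id, IsIso.eq_inv_comp, ha]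
  · show G ≫ 𝟙 B = 𝟙 X ≫ G; simp
  · show (H ≫ (shiftFunctor C (1:ℤ)).map a) ≫ (shiftFunctor C (1:ℤ)).map (inv a) = 𝟙 B ≫ H
    rw [id_comp, assoc, ← Functor.map_comp, IsIso.hom_inv_id]; simp

/-- `τ≤n τ≥n X` lies in `GE n`. -/
lemma le_ge_mem_ge (hher : IsHereditary t) (n : ℤ) (X : C) :
    t.ge n ((d.τle n).obj ((d.τge n).obj X)) := by
  obtain ⟨A, B, hA, hB, F, G, H, mem⟩ :=
    t.exists_triangle ((d.τle n).obj ((d.τge n).obj X)) (n-1) n (by omega)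
  have hF : F = 0 := by
    apply le_ext d n (t.le_monotone (show n-1 ≤ n by omega) _ hA)
    rw [zero_comp]
    exact zero_of_le_ge (show n-1 < n by omega) hA (d.ge_mem n X) _
  have hH : H = 0 := zero_of_her hher (show (n-2) + 2 ≤ n by omega) hB
    (t.le_shift (n-1) 1 (n-2) (by omega) _ hA) H
  have hzero : IsZero (Triangle.mk F G H).obj₁ :=
    (Triangle.isZero₁_iff _ mem).2 ⟨hF, hH⟩
  have : IsIso (Triangle.mk F G H).mor₂ := (Triangle.isZero₁_iff_isIso₂ _ mem).1 hzero
  exact (ObjectProperty.prop_iff_of_iso (t.ge n) (asIso (Triangle.mk F G H).mor₂)).2 hB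

/-- Hereditary splitting: a retraction of the counit `ι : τ≤n W ⟶ W` for `W = τ≥n X`. -/
lemma exists_retraction (hher : IsHereditary t) (n : ℤ) (X : C) :
    ∃ r : (d.τge n).obj X ⟶ (d.τle n).obj ((d.τge n).obj X),
      ((d.ι n).app ((d.τge n).obj X) ≫ r = 𝟙 _) ∧
      (∀ (S : C), t.le n S → ∀ (m : S ⟶ (d.τge n).obj X),
        m ≫ r ≫ (d.ι n).app ((d.τge n).obj X) = m) := by
  obtain ⟨A, B, hA, hB, F, G, H, mem⟩ :=
    t.exists_triangle ((d.τge n).obj X) n (n+1) rfl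
  have hH : H = 0 := zero_of_her hher (show (n-1) + 2 ≤ n + 1 by omega) hB
    (t.le_shift n 1 (n-1) (by omega) _ hA) H
  obtain ⟨rh, hrh⟩ : ∃ g : (d.τge n).obj X ⟶ A, 𝟙 A = F ≫ g :=
    Triangle.yoneda_exact₂ _ (inv_rot_of_distTriang _ mem) (𝟙 A)
      (by subst hH; show (-(shiftFunctor C (-1)).map (0 : B ⟶ A⟦(1:ℤ)⟧) ≫ (shiftFunctorCompIsoId C (1:ℤ) (-1) (by omega)).hom.app A) ≫ 𝟙 A = 0; simp)
  have key : ∀ (S : C), t.le n S → ∀ (m : S ⟶ (d.τge n).obj X), m ≫ rh ≫ F = m := by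
    intro S hS m
    have hx : F ≫ (𝟙 ((d.τge n).obj X) - rh ≫ F) = 0 := by
      rw [Preadditive.comp_sub, comp_id, ← assoc, ← hrh, id_comp, sub_self]
    obtain ⟨vB, hvB⟩ : ∃ g : B ⟶ (d.τge n).obj X,
        𝟙 ((d.τge n).obj X) - rh ≫ F = G ≫ g := Triangle.yoneda_exact₂ _ mem _ hx
    have hmG : m ≫ G = 0 := zero_of_le_ge (show n < n+1 by omega) hS hB (m ≫ G)
    have hz : m ≫ (𝟙 ((d.τge n).obj X) - rh ≫ F) = 0 := by
      rw [hvB, ← assoc, hmG, zero_comp]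
    rw [Preadditive.comp_sub, comp_id, sub_eq_zero] at hz
    exact hz.symm
  obtain ⟨a, ha⟩ := le_lift d n hA F
  refine ⟨rh ≫ a, ?_, ?_⟩
  · apply le_ext d n (d.le_mem n _)
    rw [id_comp, assoc, assoc, ha]
    exact key _ (d.le_mem n _) _
  · intro S hS m
    have h2 : (rh ≫ a) ≫ (d.ι n).app ((d.τge n).obj X) = rh ≫ F := by rw [assoc, ha]
    rw [h2]
    exact key S hS m

/-- Hereditary lifting: a section of `π` over `ι`. -/
lemma exists_section (hher : IsHereditary t) (n : ℤ) (X : C) :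
    ∃ s : (d.τle n).obj ((d.τge n).obj X) ⟶ X,
      s ≫ (d.π n).app X = (d.ι n).app ((d.τge n).obj X) := by
  obtain ⟨A, hA, F, H, mem⟩ := ge_triangle d n X
  have h0 : (d.ι n).app ((d.τge n).obj X) ≫ H = 0 :=
    zero_of_her hher (show (n-2) + 2 ≤ n by omega) (le_ge_mem_ge d hher n X)
      (t.le_shift (n-1) 1 (n-2) (by omega) _ hA) _
  obtain ⟨s, hs⟩ := Triangle.coyoneda_exact₃ _ mem _ h0
  exact ⟨s, hs.symm⟩

/-- If `u ≫ π ≫ r = 0` then `τ≤n τ≥n u = 0`. -/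
lemma tau_map_zero (hher : IsHereditary t) (n : ℤ) {T Z : C} (u : T ⟶ Z)
    (r : (d.τge n).obj Z ⟶ (d.τle n).obj ((d.τge n).obj Z))
    (hr2 : ∀ (S : C), t.le n S → ∀ (m : S ⟶ (d.τge n).obj Z),
      m ≫ r ≫ (d.ι n).app ((d.τge n).obj Z) = m)
    (h : u ≫ (d.π n).app Z ≫ r = 0) :
    (d.τle n).map ((d.τge n).map u) = 0 := by
  have hv : (d.τge n).map u ≫ r = 0 := by
    apply ge_ext d n (le_ge_mem_ge d hher n Z)
    have := (d.π n).naturality u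
    dsimp at this
    rw [comp_zero, ← assoc, ← this, assoc, h]
  have hm : (d.ι n).app ((d.τge n).obj T) ≫ (d.τge n).map u = 0 := by
    have := hr2 _ (d.le_mem n _) ((d.ι n).app ((d.τge n).obj T) ≫ (d.τge n).map u)
    rw [← this, assoc, ← assoc _ r, hv, zero_comp, comp_zero]
  apply le_ext d n (d.le_mem n _)
  have := (d.ι n).naturality ((d.τge n).map u)
  dsimp at this
  rw [zero_comp, this, hm]

/-- If `τ≥m X` happens to lie in `GE m'` for `m ≤ m'`, it is isomorphic to `τ≥m' X`. -/
lemma ge_comparison_iso {m m' : ℤ} (hmm' : m ≤ m') (X : C)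
    (hX : t.ge m' ((d.τge m).obj X)) :
    Nonempty ((d.τge m).obj X ≅ (d.τge m').obj X) := by
  obtain ⟨a, ha⟩ := ge_desc d m (t.ge_antitone hmm' _ (d.ge_mem m' X)) ((d.π m').app X)
  obtain ⟨b, hb⟩ := ge_desc d m' hX ((d.π m).app X)
  dsimp only [Functor.id_obj] at ha hb
  refine ⟨⟨a, b, ?_, ?_⟩⟩
  · apply ge_ext d m (d.ge_mem m X)
    rw [comp_id, ← assoc, ha, hb]
  · apply ge_ext d m' (d.ge_mem m' X)
    rw [comp_id, ← assoc, hb, ha]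

/-- Non-degeneracy: an object all of whose cohomologies vanish is zero. -/
lemma isZero_of_H_zero (hher : IsHereditary t) (hnd : IsNondegenerate t) (X : C)
    (hX : ∀ n : ℤ, IsZero ((d.τle n).obj ((d.τge n).obj X))) : IsZero X := by
  have key : ∀ (n m : ℤ), n ≤ m →
      t.ge m ((d.τge n).obj X) ∧ IsZero ((d.τle m).obj ((d.τge n).obj X)) := by
    intro n
    refine Int.le_induction ?_ ?_
    · exact ⟨d.ge_mem n X, hX n⟩
    · intro m hm ih
      obtain ⟨h1, h2⟩ := ih
      obtain ⟨B, hB, G, H, mem⟩ := le_triangle d m ((d.τge n).obj X)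
      have hGiso : IsIso G := (Triangle.isZero₁_iff_isIso₂ _ mem).1 (by exact h2)
      have hge : t.ge (m+1) ((d.τge n).obj X) :=
        (ObjectProperty.prop_iff_of_iso (t.ge (m+1)) (asIso G)).2 hB
      refine ⟨hge, ?_⟩
      obtain ⟨e⟩ := ge_comparison_iso d (show n ≤ m+1 by omega) X hge
      exact (hX (m+1)).of_iso ((d.τle (m+1)).mapIso e)
  have hzero : ∀ n : ℤ, IsZero ((d.τge n).obj X) := by
    intro n
    apply hnd.2
    intro m
    rcases le_or_gt n m with hnm | hnm
    · exact (key n m hnm).1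
    · exact t.ge_antitone (by omega) _ (d.ge_mem n X)
  have hle : ∀ n : ℤ, t.le n X := by
    intro n
    obtain ⟨A, hA, F, H, mem⟩ := ge_triangle d (n+1) X
    have hFiso : IsIso F := (Triangle.isZero₃_iff_isIso₁ _ mem).1 (by exact hzero (n+1))
    have h' := (ObjectProperty.prop_iff_of_iso (t.le (n+1-1)) (asIso F)).1 hA
    simpa using h'
  exact hnd.1 X hle

lemma H_heart (hher : IsHereditary t) (Z : C) (n : ℤ) : InHeart t ((d.H n).obj Z) :=
  ⟨t.le_shift n n 0 (by omega) _ (d.le_mem n _),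
   t.ge_shift n n 0 (by omega) _ (le_ge_mem_ge d hher n Z)⟩

lemma S_mem (hher : IsHereditary t) (Z : C) (n : ℤ) :
    t.le n (((d.H n).obj Z)⟦(-n : ℤ)⟧) ∧ t.ge n (((d.H n).obj Z)⟦(-n : ℤ)⟧) :=
  ⟨(ObjectProperty.prop_iff_of_iso (t.le n) (shiftShiftNeg ((d.τle n).obj ((d.τge n).obj Z)) n)).2
      (d.le_mem n _),
   (ObjectProperty.prop_iff_of_iso (t.ge n) (shiftShiftNeg ((d.τle n).obj ((d.τge n).obj Z)) n)).2
      (le_ge_mem_ge d hher n Z)⟩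

lemma exists_sp (hher : IsHereditary t) (Z : C) (n : ℤ) :
    ∃ (s : ((d.H n).obj Z)⟦(-n : ℤ)⟧ ⟶ Z) (p : Z ⟶ ((d.H n).obj Z)⟦(-n : ℤ)⟧),
      s ≫ p = 𝟙 _ ∧
      ∀ (T : C) (u : T ⟶ Z), u ≫ p = 0 → (d.τle n).map ((d.τge n).map u) = 0 := by
  obtain ⟨r, hr1, hr2⟩ := exists_retraction d hher n Z
  obtain ⟨sec, hsec⟩ := exists_section d hher n Z
  let e : ((d.H n).obj Z)⟦(-n : ℤ)⟧ ≅ (d.τle n).obj ((d.τge n).obj Z) :=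
    shiftShiftNeg ((d.τle n).obj ((d.τge n).obj Z)) n
  refine ⟨e.hom ≫ sec, (d.π n).app Z ≫ r ≫ e.inv, ?_, ?_⟩
  · have h1 : sec ≫ (d.π n).app Z ≫ r ≫ e.inv = e.inv := by
      rw [← assoc, hsec, ← assoc, hr1, id_comp]
    rw [assoc, h1, Iso.hom_inv_id]
  · intro T u hu
    have h2 : u ≫ (d.π n).app Z ≫ r = 0 := by
      have h3 : (u ≫ ((d.π n).app Z ≫ r ≫ e.inv)) ≫ e.hom = u ≫ (d.π n).app Z ≫ r := by
        simp only [assoc, Iso.inv_hom_id, comp_id]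
      rw [← h3, hu, zero_comp]
    exact tau_map_zero d hher n u r hr2 h2

end Aux

/-- Let `U` be a hereditary, non-degenerate t-structure such that for every
family `(Aₙ)_{n ∈ ℤ}` of objects of the heart, the coproduct `∐ₙ Σ⁻ⁿAₙ` and the product
`∏ₙ Σ⁻ⁿAₙ` exist and the canonical morphism between them is an isomorphism. Then every
object `Z` is isomorphic to `∐ₙ Σ⁻ⁿHⁿ(Z)`. -/
theorem statement5 (t : TStructure C) (d : TruncData t)
    (hher : IsHereditary t) (hnd : IsNondegenerate t)
    (h : ∀ A : ℤ → C, (∀ n : ℤ, InHeart t (A n)) →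
      ∃ (c : Cofan (fun n : ℤ => (A n)⟦(-n : ℤ)⟧)) (_ : IsColimit c)
        (p : Fan (fun n : ℤ => (A n)⟦(-n : ℤ)⟧)) (_ : IsLimit p)
        (φ : c.pt ⟶ p.pt),
        (∀ i j : ℤ, c.inj i ≫ φ ≫ p.proj j =
          (if hij : i = j then eqToHom (by rw [hij]) else 0)) ∧ IsIso φ)
    (Z : C) :
    ∃ c : Cofan (fun n : ℤ => ((d.H n).obj Z)⟦(-n : ℤ)⟧),
      Nonempty (IsColimit c) ∧ Nonempty (Z ≅ c.pt) := by
  classical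
  obtain ⟨c, hc, p, hp, φ, hφd, hφiso⟩ := h (fun n => (d.H n).obj Z) (H_heart d hher Z)
  haveI : IsIso φ := hφiso
  choose sfun pfun hsp hkill using exists_sp d hher Z
  let α : c.pt ⟶ Z := hc.desc (Cofan.mk Z sfun)
  let β : Z ⟶ p.pt := hp.lift (Fan.mk Z pfun)
  have hα : ∀ n : ℤ, c.inj n ≫ α = sfun n := fun n => hc.fac (Cofan.mk Z sfun) ⟨n⟩
  have hβ : ∀ n : ℤ, β ≫ p.proj n = pfun n := fun n => hp.fac (Fan.mk Z pfun) ⟨n⟩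
  have hAB : ∀ i j : ℤ, c.inj i ≫ (α ≫ β) ≫ p.proj j = sfun i ≫ pfun j := by
    intro i j
    have h1 : c.inj i ≫ (α ≫ β) ≫ p.proj j = (c.inj i ≫ α) ≫ (β ≫ p.proj j) := by
      simp only [assoc]
    rw [h1, hα i, hβ j]
  have hent : ∀ i j : ℤ, j ≠ i - 1 → c.inj i ≫ (α ≫ β - φ) ≫ p.proj j = 0 := by
    intro i j hij
    have h2 : c.inj i ≫ (α ≫ β - φ) ≫ p.proj j
        = (c.inj i ≫ (α ≫ β) ≫ p.proj j) - (c.inj i ≫ φ ≫ p.proj j) := by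
      rw [Preadditive.sub_comp, Preadditive.comp_sub]
    rw [h2, hAB i j, hφd i j]
    rcases lt_trichotomy i j with hlt | heq | hgt
    · rw [dif_neg (by omega), sub_zero]
      exact zero_of_le_ge hlt (S_mem d hher Z i).1 (S_mem d hher Z j).2 _
    · subst heq
      rw [dif_pos rfl, hsp i]
      simp
    · rw [dif_neg (by omega), sub_zero]
      exact zero_of_her hher (by omega) (S_mem d hher Z i).2 (S_mem d hher Z j).1 _
  have hN : ∀ i : ℤ, c.inj i ≫ ((α ≫ β - φ) ≫ inv φ)
      = (c.inj i ≫ (α ≫ β - φ) ≫ p.proj (i-1)) ≫ c.inj (i-1) := by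
    intro i
    rw [← cancel_mono φ]
    apply hp.hom_ext
    rintro ⟨j⟩
    show _ ≫ p.proj j = _ ≫ p.proj j
    simp only [assoc, IsIso.inv_hom_id_assoc]
    rw [hφd (i-1) j]
    by_cases hij : i - 1 = j
    · subst hij
      rw [dif_pos rfl, eqToHom_refl, comp_id]
    · rw [dif_neg hij]
      simp only [comp_zero]
      exact hent i j (by omega)
  have hNN : ((α ≫ β - φ) ≫ inv φ) ≫ ((α ≫ β - φ) ≫ inv φ) = 0 := by
    apply hc.hom_ext
    rintro ⟨i⟩
    show c.inj i ≫ _ = c.inj i ≫ _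
    have hEE : (c.inj i ≫ (α ≫ β - φ) ≫ p.proj (i-1))
        ≫ (c.inj (i-1) ≫ (α ≫ β - φ) ≫ p.proj (i-1-1)) = 0 :=
      zero_of_her hher (show (i-1-1) + 2 ≤ i by omega)
        (S_mem d hher Z i).2 (S_mem d hher Z (i-1-1)).1 _
    rw [comp_zero, ← assoc, hN i, assoc, hN (i-1), ← assoc, hEE, zero_comp]
  set N : c.pt ⟶ c.pt := (α ≫ β - φ) ≫ inv φ with hNdef
  haveI hplus : IsIso (𝟙 c.pt + N) := by
    refine ⟨⟨𝟙 c.pt - N, ?_, ?_⟩⟩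
    · simp only [Preadditive.add_comp, Preadditive.comp_add, Preadditive.sub_comp,
        Preadditive.comp_sub, id_comp, comp_id, hNN]
      abel
    · simp only [Preadditive.add_comp, Preadditive.comp_add, Preadditive.sub_comp,
        Preadditive.comp_sub, id_comp, comp_id, hNN]
      abel
  have hαβ : α ≫ β = (𝟙 c.pt + N) ≫ φ := by
    rw [Preadditive.add_comp, id_comp, hNdef, assoc, IsIso.inv_hom_id, comp_id]
    abel
  haveI : IsIso (α ≫ β) := by
    rw [hαβ]
    infer_instance
  have hαρ : α ≫ (β ≫ inv (α ≫ β)) = 𝟙 c.pt := by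
    rw [← assoc, IsIso.hom_inv_id]
  obtain ⟨W, G, H, mem⟩ := distinguished_cocone_triangle α
  have h31 : H ≫ (shiftFunctor C (1:ℤ)).map α = 0 := comp_distTriang_mor_zero₃₁ _ mem
  have h12 : α ≫ G = 0 := comp_distTriang_mor_zero₁₂ _ mem
  have hH0 : H = 0 := by
    calc H = H ≫ (shiftFunctor C (1:ℤ)).map (α ≫ (β ≫ inv (α ≫ β))) := by
            rw [hαρ, CategoryTheory.Functor.map_id, comp_id]
    _ = (H ≫ (shiftFunctor C (1:ℤ)).map α) ≫ (shiftFunctor C (1:ℤ)).map (β ≫ inv (α ≫ β)) := by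
            rw [Functor.map_comp, assoc]
    _ = 0 := by rw [h31]; exact zero_comp
  obtain ⟨s0, hs0⟩ : ∃ s0 : W ⟶ Z, 𝟙 W = s0 ≫ G := Triangle.coyoneda_exact₃ _ mem (𝟙 W) (by
    dsimp only [Triangle.mk]; rw [hH0]; exact comp_zero)
  have hf : α ≫ (𝟙 Z - (β ≫ inv (α ≫ β)) ≫ α) = 0 := by
    rw [Preadditive.comp_sub, comp_id, ← assoc, hαρ, id_comp, sub_self]
  obtain ⟨w, hw⟩ : ∃ w : W ⟶ Z, 𝟙 Z - (β ≫ inv (α ≫ β)) ≫ α = G ≫ w :=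
    Triangle.yoneda_exact₂ _ mem _ hf
  have h1 : G ≫ w ≫ G = G := by
    rw [← assoc, ← hw, Preadditive.sub_comp, id_comp, assoc, h12, comp_zero, sub_zero]
  have hwG : w ≫ G = 𝟙 W := by
    calc w ≫ G = (s0 ≫ G) ≫ (w ≫ G) := by rw [← hs0, id_comp]
    _ = s0 ≫ (G ≫ w ≫ G) := by simp only [assoc]
    _ = s0 ≫ G := by rw [h1]
    _ = 𝟙 W := hs0.symm
  have hρβ : (β ≫ inv (α ≫ β)) ≫ (α ≫ β) = β := by
    rw [assoc, IsIso.inv_hom_id, comp_id]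
  have hfβ : (𝟙 Z - (β ≫ inv (α ≫ β)) ≫ α) ≫ β = 0 := by
    rw [Preadditive.sub_comp, id_comp, assoc ((β ≫ inv (α ≫ β))) α β, hρβ, sub_self]
  have hwβ : w ≫ β = 0 := by
    have h2 : G ≫ w ≫ β = 0 := by rw [← assoc, ← hw, hfβ]
    calc w ≫ β = (s0 ≫ G) ≫ (w ≫ β) := by rw [← hs0, id_comp]
    _ = s0 ≫ (G ≫ w ≫ β) := by simp only [assoc]
    _ = 0 := by rw [h2, comp_zero]
  have hwkill : ∀ n : ℤ, (d.τle n).map ((d.τge n).map w) = 0 := by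
    intro n
    apply hkill n W w
    rw [← hβ n, ← assoc, hwβ, zero_comp]
  have hFW : ∀ n : ℤ, IsZero ((d.τle n).obj ((d.τge n).obj W)) := by
    intro n
    rw [IsZero.iff_id_eq_zero]
    have h3 : (d.τle n).map ((d.τge n).map (w ≫ G)) = 𝟙 ((d.τle n).obj ((d.τge n).obj W)) := by
      rw [hwG, CategoryTheory.Functor.map_id, CategoryTheory.Functor.map_id]
    rw [← h3, CategoryTheory.Functor.map_comp, CategoryTheory.Functor.map_comp,
      hwkill n, zero_comp]
  have hWzero : IsZero W := isZero_of_H_zero d hher hnd W hFW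
  have hαiso : IsIso α := (Triangle.isZero₃_iff_isIso₁ _ mem).1 (by exact hWzero)
  exact ⟨c, ⟨hc⟩, ⟨(asIso α).symm⟩⟩


end TStructurePaper
end

section
/- Let U and V be two t-structures on a triangulated category T and let m ≤ n be integers. Then the following are equivalent: (1) V_{≤m} ⊆ U_{≤0} ⊆ V_{≤n}; (2) U_{≤-n} ⊆ V_{≤0} ⊆ U_{≤-m}; (3) V_{≥n} ⊆ U_{≥0} ⊆ V_{≥m}; (4) U_{≥-m} ⊆ V_{≥0} ⊆ U_{≥-n}; (5) V_{≤m} ⊆ U_{≤0} and V_{≥n} ⊆ U_{≥0}; (6) U_{≤-n} ⊆ V_{≤0} and U_{≥-m} ⊆ V_{≥0}. Moreover, if both U and V are bounded, then each of (1)–(6) is equivalent to: (i) U₀ ⊆ V_{≥m} ∩ V_{≤n}, and also to (i)' V₀ ⊆ U_{≥-n} ∩ U_{≤-m}. -/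
open CategoryTheory Category Limits Pretriangulated Triangulated

namespace TStructurePaper

variable {C : Type*} [Category C] [Preadditive C] [HasZeroObject C]
  [HasShift C ℤ] [∀ (n : ℤ), (shiftFunctor C n).Additive] [Pretriangulated C]

section Aux

lemma aux_zero_of_lt (t : TStructure C) {a b : ℤ} (h : a < b) {X Y : C}
    (hX : t.le a X) (hY : t.ge b Y) (f : X ⟶ Y) : f = 0 := by
  have hX' : t.le 0 (X⟦a⟧) := t.le_shift a a 0 (by omega) X hX
  have hY' : t.ge (b - a) (Y⟦a⟧) := t.ge_shift b a (b - a) (by omega) Y hY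
  have hY'' : t.ge 1 (Y⟦a⟧) := t.ge_antitone (by omega) _ hY'
  have hz : (shiftFunctor C a).map f = 0 := t.zero' _ hX' hY''
  exact (Functor.map_eq_zero_iff (shiftFunctor C a)).1 hz

lemma aux_le_iff (t : TStructure C) (n : ℤ) (X : C) :
    t.le n X ↔ ∀ (Y : C), t.ge (n + 1) Y → ∀ f : X ⟶ Y, f = 0 := by
  constructor
  · exact fun hX Y hY f => aux_zero_of_lt t (by omega) hX hY f
  · intro h
    obtain ⟨A, B, hA, hB, a, b, c, mem⟩ := t.exists_triangle X n (n + 1) rfl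
    obtain ⟨g, hg⟩ := Triangle.yoneda_exact₃ _ mem (𝟙 B)
      (show b ≫ 𝟙 B = 0 by rw [comp_id]; exact h B hB b)
    have hA1 : t.le (n - 1) (A⟦(1 : ℤ)⟧) := t.le_shift n 1 (n - 1) (by omega) A hA
    have hg0 : g = 0 := aux_zero_of_lt t (show n - 1 < n + 1 by omega) hA1 hB g
    have hBz : IsZero B := by
      rw [IsZero.iff_id_eq_zero, hg, hg0, comp_zero]; rfl
    have hi : IsIso a := (Triangle.isZero₃_iff_isIso₁ _ mem).1 hBz
    exact ObjectProperty.prop_of_iso (t.le n) (@asIso _ _ _ _ a hi) hA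

lemma aux_ge_iff (t : TStructure C) (n : ℤ) (Y : C) :
    t.ge n Y ↔ ∀ (X : C), t.le (n - 1) X → ∀ f : X ⟶ Y, f = 0 := by
  constructor
  · exact fun hY X hX f => aux_zero_of_lt t (by omega) hX hY f
  · intro h
    obtain ⟨A, B, hA, hB, a, b, c, mem⟩ := t.exists_triangle Y (n - 1) n (by omega)
    obtain ⟨g, hg⟩ := Triangle.coyoneda_exact₂ _ (inv_rot_of_distTriang _ mem) (𝟙 A)
      (show 𝟙 A ≫ a = 0 by rw [id_comp]; exact h A hA a)
    have hB1 : t.ge (n + 1) (B⟦(-1 : ℤ)⟧) := t.ge_shift n (-1) (n + 1) (by omega) B hB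
    have hg0 : g = 0 := aux_zero_of_lt t (show n - 1 < n + 1 by omega) hA hB1 g
    have hAz : IsZero A := by
      rw [IsZero.iff_id_eq_zero, hg, hg0, zero_comp]; rfl
    have hi : IsIso b := (Triangle.isZero₁_iff_isIso₂ _ mem).1 hAz
    exact ObjectProperty.prop_of_iso (t.ge n) (@asIso _ _ _ _ b hi).symm hB

lemma aux_le_ext (t : TStructure C) {T : Triangle C} (hT : T ∈ distTriang C) (n : ℤ)
    (h₁ : t.le n T.obj₁) (h₃ : t.le n T.obj₃) : t.le n T.obj₂ := by
  rw [aux_le_iff]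
  intro Y hY f
  obtain ⟨g, hg⟩ := Triangle.yoneda_exact₂ _ hT f
    (aux_zero_of_lt t (show n < n + 1 by omega) h₁ hY _)
  rw [hg, aux_zero_of_lt t (show n < n + 1 by omega) h₃ hY g, comp_zero]

lemma aux_ge_ext (t : TStructure C) {T : Triangle C} (hT : T ∈ distTriang C) (n : ℤ)
    (h₁ : t.ge n T.obj₁) (h₃ : t.ge n T.obj₃) : t.ge n T.obj₂ := by
  rw [aux_ge_iff]
  intro X hX f
  obtain ⟨g, hg⟩ := Triangle.coyoneda_exact₂ _ hT f
    (aux_zero_of_lt t (show n - 1 < n by omega) hX h₃ _)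
  rw [hg, aux_zero_of_lt t (show n - 1 < n by omega) hX h₁ g, zero_comp]

lemma aux_le_shift_iff (t : TStructure C) (a k : ℤ) (X : C) :
    t.le (a + k) X ↔ t.le a (X⟦k⟧) := by
  rw [← t.shift_le k a (a + k) (by omega)]
  exact Iff.rfl

lemma aux_ge_shift_iff (t : TStructure C) (a k : ℤ) (X : C) :
    t.ge (a + k) X ↔ t.ge a (X⟦k⟧) := by
  rw [← t.shift_ge k a (a + k) (by omega)]
  exact Iff.rfl

lemma aux_le_le (t t' : TStructure C) (a b a' b' : ℤ) (h : a' - a = b' - b) :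
    (∀ X : C, t.le a X → t'.le b X) ↔ (∀ X : C, t.le a' X → t'.le b' X) := by
  have key : ∀ (p q k : ℤ), (∀ X : C, t.le p X → t'.le q X) →
      ∀ X : C, t.le (p + k) X → t'.le (q + k) X := by
    intro p q k hpq X hX
    rw [aux_le_shift_iff] at hX ⊢
    exact hpq _ hX
  constructor
  · intro hh X hX
    have h2 := key a b (a' - a) hh X (by rwa [show a + (a' - a) = a' by omega])
    rwa [show b + (a' - a) = b' by omega] at h2
  · intro hh X hX
    have h2 := key a' b' (a - a') hh X (by rwa [show a' + (a - a') = a by omega])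
    rwa [show b' + (a - a') = b by omega] at h2

lemma aux_ge_ge (t t' : TStructure C) (a b a' b' : ℤ) (h : a' - a = b' - b) :
    (∀ X : C, t.ge a X → t'.ge b X) ↔ (∀ X : C, t.ge a' X → t'.ge b' X) := by
  have key : ∀ (p q k : ℤ), (∀ X : C, t.ge p X → t'.ge q X) →
      ∀ X : C, t.ge (p + k) X → t'.ge (q + k) X := by
    intro p q k hpq X hX
    rw [aux_ge_shift_iff] at hX ⊢
    exact hpq _ hX
  constructor
  · intro hh X hX
    have h2 := key a b (a' - a) hh X (by rwa [show a + (a' - a) = a' by omega])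
    rwa [show b + (a' - a) = b' by omega] at h2
  · intro hh X hX
    have h2 := key a' b' (a - a') hh X (by rwa [show a' + (a - a') = a by omega])
    rwa [show b' + (a - a') = b by omega] at h2

lemma aux_le_ge (t t' : TStructure C) (a b a' b' : ℤ) (h : a' - a = b' - b) :
    (∀ X : C, t.le a X → t'.le b X) ↔ (∀ X : C, t'.ge b' X → t.ge a' X) := by
  have base : (∀ X : C, t.le a X → t'.le b X) ↔
      (∀ X : C, t'.ge (b + 1) X → t.ge (a + 1) X) := by
    constructor
    · intro hh Y hY
      rw [aux_ge_iff]
      intro X hX f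
      have hX' : t.le a X := by rwa [show a + 1 - 1 = a by omega] at hX
      exact aux_zero_of_lt t' (show b < b + 1 by omega) (hh X hX') hY f
    · intro hh X hX
      rw [aux_le_iff]
      intro Y hY f
      exact aux_zero_of_lt t (show a < a + 1 by omega) hX (hh Y hY) f
  rw [base]
  exact aux_ge_ge t' t (b + 1) (a + 1) b' a' (by omega)

lemma aux_heart_le (u v : TStructure C) (n : ℤ) (hu : IsBounded u)
    (h : ∀ X : C, InHeart u X → v.le n X) : ∀ X : C, u.le 0 X → v.le n X := by
  have key : ∀ (k : ℕ) (X : C), u.le 0 X → u.ge (-(k : ℤ)) X → v.le n X := by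
    intro k
    induction k with
    | zero =>
      intro X h1 h2
      exact h X ⟨h1, by simpa using h2⟩
    | succ k ih =>
      intro X h1 h2
      obtain ⟨A, B, hA, hB, a, b, c, mem⟩ := u.exists_triangle X (-1) 0 (by omega)
      have hB0 : u.le 0 B := by
        rw [aux_le_iff]
        intro Y hY f
        obtain ⟨g, hg⟩ := Triangle.yoneda_exact₃ _ mem f
          (aux_zero_of_lt u (show (0 : ℤ) < 0 + 1 by omega) h1 hY _)
        have hA1 : u.le (-2) (A⟦(1 : ℤ)⟧) := u.le_shift (-1) 1 (-2) (by omega) A hA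
        rw [hg, aux_zero_of_lt u (show (-2 : ℤ) < 0 + 1 by omega) hA1 hY g]; exact comp_zero
      have hBv : v.le n B := h B ⟨hB0, hB⟩
      have hAge : u.ge (-(k : ℤ) - 1) A := by
        rw [aux_ge_iff]
        intro W hW f
        obtain ⟨g, hg⟩ := Triangle.coyoneda_exact₂ _ (inv_rot_of_distTriang _ mem) f
          (aux_zero_of_lt u (by push_cast; omega) hW h2 (f ≫ a))
        have hB1 : u.ge 1 (B⟦(-1 : ℤ)⟧) := u.ge_shift 0 (-1) 1 (by omega) B hB
        rw [hg, aux_zero_of_lt u (show -(k : ℤ) - 1 - 1 < 1 by omega) hW hB1 g]; exact zero_comp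
      have hA2 : u.le 0 (A⟦(-1 : ℤ)⟧) := u.le_shift (-1) (-1) 0 (by omega) A hA
      have hA3 : u.ge (-(k : ℤ)) (A⟦(-1 : ℤ)⟧) :=
        u.ge_shift (-(k : ℤ) - 1) (-1) (-(k : ℤ)) (by omega) A hAge
      have hAv : v.le n A := by
        have h4 := ih _ hA2 hA3
        have h5 : v.le (n - 1) ((A⟦(-1 : ℤ)⟧)⟦(1 : ℤ)⟧) :=
          v.le_shift n 1 (n - 1) (by omega) _ h4
        have h6 := v.le_monotone (show n - 1 ≤ n by omega) _ h5
        exact ObjectProperty.prop_of_iso (v.le n) (shiftNegShift A (1 : ℤ)) h6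
      exact aux_le_ext v mem n hAv hBv
  intro X hX
  obtain ⟨j, hj⟩ := hu.2 X
  exact key (-j).toNat X hX
    (u.ge_antitone (show -(((-j).toNat : ℕ) : ℤ) ≤ j by omega) X hj)

lemma aux_heart_ge (u v : TStructure C) (m : ℤ) (hu : IsBounded u)
    (h : ∀ X : C, InHeart u X → v.ge m X) : ∀ X : C, u.ge 0 X → v.ge m X := by
  have key : ∀ (k : ℕ) (X : C), u.ge 0 X → u.le (k : ℤ) X → v.ge m X := by
    intro k
    induction k with
    | zero =>
      intro X h1 h2
      exact h X ⟨by simpa using h2, h1⟩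
    | succ k ih =>
      intro X h1 h2
      obtain ⟨A, B, hA, hB, a, b, c, mem⟩ := u.exists_triangle X 0 1 (by omega)
      have hA0 : u.ge 0 A := by
        rw [aux_ge_iff]
        intro W hW f
        obtain ⟨g, hg⟩ := Triangle.coyoneda_exact₂ _ (inv_rot_of_distTriang _ mem) f
          (aux_zero_of_lt u (show (0 : ℤ) - 1 < 0 by omega) hW h1 (f ≫ a))
        have hB1 : u.ge 2 (B⟦(-1 : ℤ)⟧) := u.ge_shift 1 (-1) 2 (by omega) B hB
        rw [hg, aux_zero_of_lt u (show (0 : ℤ) - 1 < 2 by omega) hW hB1 g]; exact zero_comp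
      have hAv : v.ge m A := h A ⟨hA, hA0⟩
      have hBle : u.le ((k : ℤ) + 1) B := by
        rw [aux_le_iff]
        intro Y hY f
        obtain ⟨g, hg⟩ := Triangle.yoneda_exact₃ _ mem f
          (aux_zero_of_lt u (by push_cast; omega) h2 hY (b ≫ f))
        have hA1 : u.le (-1) (A⟦(1 : ℤ)⟧) := u.le_shift 0 1 (-1) (by omega) A hA
        rw [hg, aux_zero_of_lt u (show (-1 : ℤ) < (k : ℤ) + 1 + 1 by omega) hA1 hY g]; exact comp_zero
      have hB2 : u.ge 0 (B⟦(1 : ℤ)⟧) := u.ge_shift 1 1 0 (by omega) B hB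
      have hB3 : u.le (k : ℤ) (B⟦(1 : ℤ)⟧) := u.le_shift ((k : ℤ) + 1) 1 (k : ℤ) (by omega) B hBle
      have hBv : v.ge m B := by
        have h4 := ih _ hB2 hB3
        have h5 : v.ge (m + 1) ((B⟦(1 : ℤ)⟧)⟦(-1 : ℤ)⟧) :=
          v.ge_shift m (-1) (m + 1) (by omega) _ h4
        have h6 := v.ge_antitone (show m ≤ m + 1 by omega) _ h5
        exact ObjectProperty.prop_of_iso (v.ge m) (shiftShiftNeg B (1 : ℤ)) h6
      exact aux_ge_ext v mem m hAv hBv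
  intro X hX
  obtain ⟨j, hj⟩ := hu.1 X
  exact key j.toNat X hX (u.le_monotone (show j ≤ ((j.toNat : ℕ) : ℤ) by omega) X hj)

lemma aux_bounded_heart (u v : TStructure C) (m n : ℤ) (hu : IsBounded u) :
    ((∀ X : C, v.le m X → u.le 0 X) ∧ (∀ X : C, u.le 0 X → v.le n X)) ↔
      (∀ X : C, InHeart u X → v.ge m X ∧ v.le n X) := by
  have hdual : (∀ X : C, v.le m X → u.le 0 X) ↔ (∀ X : C, u.ge 0 X → v.ge m X) :=
    aux_le_ge v u m 0 m 0 (by omega)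
  constructor
  · rintro ⟨h1, h2⟩ X ⟨hle, hge⟩
    exact ⟨hdual.1 h1 X hge, h2 X hle⟩
  · intro hh
    exact ⟨hdual.2 (aux_heart_ge u v m hu (fun X hX => (hh X hX).1)),
      aux_heart_le u v n hu (fun X hX => (hh X hX).2)⟩

end Aux

/-- (Lemma on comparing two t-structures.) For t-structures `U`, `V` and
integers `m ≤ n`, conditions (1)–(6) are equivalent; if moreover both `U` and `V` are
bounded, they are also equivalent to (i) `U₀ ⊆ V_{[m,n]}` and to (i)' `V₀ ⊆ U_{[-n,-m]}`. -/
theorem statement10 (u v : TStructure C) (m n : ℤ) (hmn : m ≤ n) :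
    ([(∀ X : C, v.le m X → u.le 0 X) ∧ (∀ X : C, u.le 0 X → v.le n X),
      (∀ X : C, u.le (-n) X → v.le 0 X) ∧ (∀ X : C, v.le 0 X → u.le (-m) X),
      (∀ X : C, v.ge n X → u.ge 0 X) ∧ (∀ X : C, u.ge 0 X → v.ge m X),
      (∀ X : C, u.ge (-m) X → v.ge 0 X) ∧ (∀ X : C, v.ge 0 X → u.ge (-n) X),
      (∀ X : C, v.le m X → u.le 0 X) ∧ (∀ X : C, v.ge n X → u.ge 0 X),
      (∀ X : C, u.le (-n) X → v.le 0 X) ∧ (∀ X : C, u.ge (-m) X → v.ge 0 X)].TFAE) ∧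
    (IsBounded u → IsBounded v →
      ((((∀ X : C, v.le m X → u.le 0 X) ∧ (∀ X : C, u.le 0 X → v.le n X)) ↔
          (∀ X : C, InHeart u X → v.ge m X ∧ v.le n X)) ∧
       (((∀ X : C, v.le m X → u.le 0 X) ∧ (∀ X : C, u.le 0 X → v.le n X)) ↔
          (∀ X : C, InHeart v X → u.ge (-n) X ∧ u.le (-m) X)))) := by
  have hA2 : (∀ X : C, v.le m X → u.le 0 X) ↔ (∀ X : C, v.le 0 X → u.le (-m) X) :=
    aux_le_le v u m 0 0 (-m) (by omega)
  have hB2 : (∀ X : C, u.le 0 X → v.le n X) ↔ (∀ X : C, u.le (-n) X → v.le 0 X) :=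
    aux_le_le u v 0 n (-n) 0 (by omega)
  have hA3 : (∀ X : C, v.le m X → u.le 0 X) ↔ (∀ X : C, u.ge 0 X → v.ge m X) :=
    aux_le_ge v u m 0 m 0 (by omega)
  have hB3 : (∀ X : C, u.le 0 X → v.le n X) ↔ (∀ X : C, v.ge n X → u.ge 0 X) :=
    aux_le_ge u v 0 n 0 n (by omega)
  have hA4 : (∀ X : C, v.le m X → u.le 0 X) ↔ (∀ X : C, u.ge (-m) X → v.ge 0 X) :=
    aux_le_ge v u m 0 0 (-m) (by omega)
  have hB4 : (∀ X : C, u.le 0 X → v.le n X) ↔ (∀ X : C, v.ge 0 X → u.ge (-n) X) :=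
    aux_le_ge u v 0 n (-n) 0 (by omega)
  constructor
  · tfae_have 1 ↔ 2 :=
      ⟨fun ⟨ha, hb⟩ => ⟨hB2.1 hb, hA2.1 ha⟩, fun ⟨hb, ha⟩ => ⟨hA2.2 ha, hB2.2 hb⟩⟩
    tfae_have 1 ↔ 3 :=
      ⟨fun ⟨ha, hb⟩ => ⟨hB3.1 hb, hA3.1 ha⟩, fun ⟨hb, ha⟩ => ⟨hA3.2 ha, hB3.2 hb⟩⟩
    tfae_have 1 ↔ 4 :=
      ⟨fun ⟨ha, hb⟩ => ⟨hA4.1 ha, hB4.1 hb⟩, fun ⟨ha, hb⟩ => ⟨hA4.2 ha, hB4.2 hb⟩⟩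
    tfae_have 1 ↔ 5 :=
      ⟨fun ⟨ha, hb⟩ => ⟨ha, hB3.1 hb⟩, fun ⟨ha, hb⟩ => ⟨ha, hB3.2 hb⟩⟩
    tfae_have 1 ↔ 6 :=
      ⟨fun ⟨ha, hb⟩ => ⟨hB2.1 hb, hA4.1 ha⟩, fun ⟨hb, ha⟩ => ⟨hA4.2 ha, hB2.2 hb⟩⟩
    tfae_finish
  · intro hu hv
    refine ⟨aux_bounded_heart u v m n hu, ?_⟩
    have hswap : ((∀ X : C, v.le m X → u.le 0 X) ∧ (∀ X : C, u.le 0 X → v.le n X)) ↔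
        ((∀ X : C, u.le (-n) X → v.le 0 X) ∧ (∀ X : C, v.le 0 X → u.le (-m) X)) :=
      ⟨fun ⟨ha, hb⟩ => ⟨hB2.1 hb, hA2.1 ha⟩, fun ⟨hb, ha⟩ => ⟨hA2.2 ha, hB2.2 hb⟩⟩
    exact hswap.trans (aux_bounded_heart v u (-n) (-m) hv)

end TStructurePaper
end

section
/- Let U and V be t-structures on a triangulated category T. Then gl.dim(U) ≤ gl.dim(V) + d(U, V) and gl.dim(V) ≤ gl.dim(U) + d(U, V) (as elements of ℕ ∪ {+∞}). -/
open CategoryTheory Category Limits Pretriangulated Triangulated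

namespace TStructurePaper

variable {C : Type*} [Category C] [Preadditive C] [HasZeroObject C]
  [HasShift C ℤ] [∀ (n : ℤ), (shiftFunctor C n).Additive] [Pretriangulated C]

lemma LE_congr (t : TStructure C) {n n' : ℤ} (h : n = n') {X : C} (hX : t.le n X) :
    t.le n' X := h ▸ hX

lemma le_shift_imp {a b : TStructure C} {p q : ℤ}
    (h : ∀ X : C, a.le p X → b.le q X) (k : ℤ) (X : C) (hX : a.le (p + k) X) :
    b.le (q + k) X := by
  have h1 : a.le p (X⟦k⟧) := a.le_shift (p + k) k p (by omega) X hX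
  have h2 : b.le q (X⟦k⟧) := h _ h1
  rw [← b.shift_le k q (q + k) (by omega)]
  exact h2

lemma hom_zero_of_le_of_ge (t : TStructure C) {A X : C} {n₀ n₁ : ℤ} (hlt : n₀ < n₁)
    (hA : t.le n₀ A) (hX : t.ge n₁ X) (f : A ⟶ X) : f = 0 := by
  have hA' : t.le 0 (A⟦n₀⟧) := t.le_shift n₀ n₀ 0 (by omega) A hA
  have hX' : t.ge 1 (X⟦n₀⟧) := t.ge_shift (n₀ + 1) n₀ 1 (by omega) X
    (t.ge_antitone (by omega : n₀ + 1 ≤ n₁) X hX)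
  apply (shiftFunctor C n₀).map_injective
  rw [Functor.map_zero]
  exact t.zero' _ hA' hX'

lemma hasGlDimAtMost_shift {t : TStructure C} {e : ℕ} (h : HasGlDimAtMost t e)
    {X Y : C} {n : ℤ} (hX : t.ge n X) (hY : t.le (n - (e + 1)) Y) (f : X ⟶ Y) : f = 0 := by
  have hX' : t.ge 0 (X⟦n⟧) := t.ge_shift n n 0 (by omega) X hX
  have hY' : t.le (-(e + 1)) (Y⟦n⟧) :=
    t.le_shift (n - (e + 1)) n (-(e + 1)) (by omega) Y hY
  apply (shiftFunctor C n).map_injective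
  rw [Functor.map_zero]
  exact h hX' hY' _

lemma hasGlDimAtMost_of_distAtMost {u v : TStructure C} {e d : ℕ}
    (hv : HasGlDimAtMost v e) (hd : DistAtMost u v d) :
    HasGlDimAtMost u (e + d) := by
  obtain ⟨m, h1, h2⟩ := hd
  intro X Y hX hY f
  -- `Y ∈ V_{≤ m - e - 1}`
  have hY' : v.le (m - (e + 1)) Y :=
    LE_congr v (by omega)
      (le_shift_imp h2 (-((e : ℤ) + d + 1)) Y (LE_congr u (by push_cast; omega) hY))
  -- truncation triangle of `X` with respect to `v`
  obtain ⟨A, B, hA, hB, a, b, c, hT⟩ := v.exists_triangle X (m - 1) m (by omega)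
  -- the map `A ⟶ X` vanishes since `A ∈ V_{≤ m-1} ⊆ U_{≤ -1}` and `X ∈ U_{≥ 0}`
  have hA' : u.le (-1) A :=
    LE_congr u (by omega) (le_shift_imp h1 (-1) A (LE_congr v (by omega) hA))
  have ha : a = 0 := hom_zero_of_le_of_ge u (by omega) hA' hX a
  -- hence `X` is a retract of `B`
  obtain ⟨r, hr⟩ : ∃ r : B ⟶ X, 𝟙 X = b ≫ r := Pretriangulated.Triangle.yoneda_exact₂ _ hT (𝟙 X)
    (by simp [ha]; exact zero_comp)
  have hrf : r ≫ f = 0 := hasGlDimAtMost_shift hv hB hY' (r ≫ f)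
  calc f = 𝟙 X ≫ f := by simp
    _ = b ≫ r ≫ f := by rw [hr]; simp
    _ = 0 := by rw [hrf, comp_zero]

lemma distAtMost_symm {u v : TStructure C} {d : ℕ} (h : DistAtMost u v d) :
    DistAtMost v u d := by
  obtain ⟨m, h1, h2⟩ := h
  refine ⟨-(m + d), fun X hX => ?_, fun X hX => ?_⟩
  · exact LE_congr v (by omega)
      (le_shift_imp h2 (-(m + (d : ℤ))) X (LE_congr u (by omega) hX))
  · exact LE_congr u (by omega)
      (le_shift_imp h1 (-m) X (LE_congr v (by omega) hX))

lemma glDim_le_of_hasGlDimAtMost {t : TStructure C} {d : ℕ} (h : HasGlDimAtMost t d) :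
    glDim t ≤ (d : ℕ∞) :=
  sInf_le ⟨d, rfl, h⟩

lemma glDim_le_add (u v : TStructure C) : glDim u ≤ glDim v + dist u v := by
  by_cases hv : glDim v = ⊤
  · rw [hv, top_add]; exact le_top
  by_cases hd : dist u v = ⊤
  · rw [hd, add_top]; exact le_top
  have hv' : {e : ℕ∞ | ∃ d : ℕ, e = d ∧ HasGlDimAtMost v d}.Nonempty := by
    by_contra hne
    exact hv (by rw [glDim, Set.not_nonempty_iff_eq_empty.1 hne, sInf_empty])
  have hd' : {e : ℕ∞ | ∃ d : ℕ, e = d ∧ DistAtMost u v d}.Nonempty := by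
    by_contra hne
    exact hd (by rw [dist, Set.not_nonempty_iff_eq_empty.1 hne, sInf_empty])
  obtain ⟨e, he, hve⟩ := csInf_mem hv'
  obtain ⟨d, hdd, hud⟩ := csInf_mem hd'
  have he' : glDim v = (e : ℕ∞) := he
  have hdd' : dist u v = (d : ℕ∞) := hdd
  calc glDim u ≤ ((e + d : ℕ) : ℕ∞) :=
        glDim_le_of_hasGlDimAtMost (hasGlDimAtMost_of_distAtMost hve hud)
    _ = glDim v + dist u v := by rw [he', hdd']; push_cast; rfl

lemma dist_comm (u v : TStructure C) : dist u v = dist v u := by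
  unfold dist
  congr 1
  ext e
  exact ⟨fun ⟨d, h1, h2⟩ => ⟨d, h1, distAtMost_symm h2⟩,
    fun ⟨d, h1, h2⟩ => ⟨d, h1, distAtMost_symm h2⟩⟩

/-- `gl.dim(U) ≤ gl.dim(V) + d(U,V)` and `gl.dim(V) ≤ gl.dim(U) + d(U,V)`,
as elements of `ℕ ∪ {+∞}`. -/
theorem statement12 (u v : TStructure C) :
    glDim u ≤ glDim v + dist u v ∧ glDim v ≤ glDim u + dist u v := by
  refine ⟨glDim_le_add u v, ?_⟩
  rw [dist_comm u v]
  exact glDim_le_add v u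

end TStructurePaper
end

section
/- Let U be a fixed t-structure on a triangulated category T, set T^b = U_ℕ, and let U^b be the restricted bounded t-structure on T^b. Then the assignment V ↦ V^b (sending a t-structure V on T to its restriction V^b = (V_{≤0} ∩ T^b, V_{≥0} ∩ T^b) on T^b) is a bijection from the set of t-structures V on T with d(U, V) < +∞ onto the set of t-structures V' on T^b with d(U^b, V') < +∞. -/
open CategoryTheory Category Limits Pretriangulated Triangulated

namespace TStructurePaper

variable {C : Type*} [Category C] [Preadditive C] [HasZeroObject C]
  [HasShift C ℤ] [∀ (n : ℤ), (shiftFunctor C n).Additive] [Pretriangulated C]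

/-- A t-structure on the full triangulated subcategory `T^b = U_ℕ` of `T`, encoded by a pair
of (isomorphism-closed) families of predicates on objects of `T` supported in `T^b`,
satisfying the axioms of a t-structure relative to `T^b` (the distinguished triangles of the
full triangulated subcategory `T^b` being the distinguished triangles of `T` whose vertices
lie in `T^b`). -/
structure RelTStructure (t : TStructure C) where
  LE (n : ℤ) : C → Prop
  GE (n : ℤ) : C → Prop
  LE_mem (n : ℤ) (X : C) : LE n X → InUN t X
  GE_mem (n : ℤ) (X : C) : GE n X → InUN t X
  LE_iso (n : ℤ) ⦃X Y : C⦄ : (X ≅ Y) → LE n X → LE n Y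
  GE_iso (n : ℤ) ⦃X Y : C⦄ : (X ≅ Y) → GE n X → GE n Y
  LE_shift (n a n' : ℤ) (h : a + n' = n) (X : C) : LE n X → LE n' (X⟦a⟧)
  GE_shift (n a n' : ℤ) (h : a + n' = n) (X : C) : GE n X → GE n' (X⟦a⟧)
  zero' ⦃X Y : C⦄ (f : X ⟶ Y) : LE 0 X → GE 1 Y → f = 0
  LE_zero_le (X : C) : LE 0 X → LE 1 X
  GE_one_le (X : C) : GE 1 X → GE 0 X
  exists_triangle (A : C) (hA : InUN t A) : ∃ (X Y : C) (_ : LE 0 X) (_ : GE 1 Y)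
    (f : X ⟶ A) (g : A ⟶ Y) (h : Y ⟶ X⟦(1 : ℤ)⟧), Triangle.mk f g h ∈ distTriang C

/-- `d(U^b, V') ≤ d` for a t-structure `V'` on `T^b = U_ℕ`: there is an integer `m` with
`V'_{≤m} ⊆ U^b_{≤0} ⊆ V'_{≤m+d}` inside `T^b`. -/
def DistAtMostRel (t : TStructure C) (v' : RelTStructure t) (d : ℕ) : Prop :=
  ∃ m : ℤ, (∀ X : C, v'.LE m X → t.le 0 X) ∧
           (∀ X : C, InUN t X → t.le 0 X → v'.LE (m + d) X)

/-- The distance `d(U^b, V')`, computed in `T^b = U_ℕ`, as an element of `ℕ∞`. -/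
noncomputable def distRel (t : TStructure C) (v' : RelTStructure t) : ℕ∞ :=
  sInf {e : ℕ∞ | ∃ d : ℕ, e = d ∧ DistAtMostRel t v' d}

section Aux

variable (u : TStructure C)

lemma tzero {X Y : C} {k l : ℤ} (hX : u.le k X) (hY : u.ge l Y) (h : k < l)
    (f : X ⟶ Y) : f = 0 := by
  have hX' : u.le 0 (X⟦k⟧) := u.le_shift k k 0 (add_zero k) X hX
  have hY' : u.ge (l - k) (Y⟦k⟧) := u.ge_shift l k (l - k) (by ring) Y hY
  have hY'' : u.ge 1 (Y⟦k⟧) := u.ge_antitone (by omega) _ hY'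
  have : (shiftFunctor C k).map f = 0 := u.zero' _ hX' hY''
  exact (shiftFunctor C k).map_eq_zero_iff.mp this

lemma tLE_shift_iff (s n : ℤ) (X : C) : u.le (s + n) X ↔ u.le n (X⟦s⟧) := by
  rw [← u.shift_le s n (s + n) rfl]
  rfl

lemma tGE_shift_iff (s n : ℤ) (X : C) : u.ge (s + n) X ↔ u.ge n (X⟦s⟧) := by
  rw [← u.shift_ge s n (s + n) rfl]
  rfl

lemma tLE_char {n : ℤ} {X : C}
    (h : ∀ ⦃Y : C⦄, u.ge (n + 1) Y → ∀ f : X ⟶ Y, f = 0) : u.le n X := by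
  obtain ⟨K, Q, hK, hQ, f, g, w, hT⟩ := u.exists_triangle X n (n + 1) rfl
  have hg : g = 0 := h hQ g
  obtain ⟨c, hc⟩ := Triangle.yoneda_exact₃ _ hT (𝟙 Q) (show g ≫ 𝟙 Q = 0 by simp [hg])
  have hc0 : c = 0 := tzero u (u.le_shift n 1 (n - 1) (by ring) K hK) hQ (by omega) c
  have hQ0 : IsZero Q := by
    rw [IsZero.iff_id_eq_zero, hc, hc0, comp_zero]; rfl
  have : IsIso f := by
    have := (Triangle.isZero₃_iff_isIso₁ _ hT).mp hQ0
    exact this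
  exact ObjectProperty.prop_of_iso (u.le n) (asIso f) hK

lemma tGE_char {n : ℤ} {Y : C}
    (h : ∀ ⦃X : C⦄, u.le (n - 1) X → ∀ f : X ⟶ Y, f = 0) : u.ge n Y := by
  obtain ⟨K, Q, hK, hQ, f, g, w, hT⟩ := u.exists_triangle Y (n - 1) n (by ring)
  have hf : f = 0 := h hK f
  obtain ⟨c, hc⟩ := Triangle.coyoneda_exact₂ _ (inv_rot_of_distTriang _ hT) (𝟙 K)
    (show 𝟙 K ≫ f = 0 by rw [hf, comp_zero])
  have hc0 : c = 0 :=
    tzero u hK (u.ge_shift n (-1) (n + 1) (by ring) Q hQ) (by omega) c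
  have hK0 : IsZero K := by
    rw [IsZero.iff_id_eq_zero, hc, hc0, zero_comp]; rfl
  have : IsIso g := (Triangle.isZero₁_iff_isIso₂ _ hT).mp hK0
  exact ObjectProperty.prop_of_iso (u.ge n) (asIso g).symm hQ

lemma tLE_ext {T : Triangle C} (hT : T ∈ distTriang C) {n : ℤ}
    (h₁ : u.le n T.obj₁) (h₃ : u.le n T.obj₃) : u.le n T.obj₂ := by
  refine tLE_char u (fun Y hY f => ?_)
  obtain ⟨c, hc⟩ := Triangle.yoneda_exact₂ _ hT f (tzero u h₁ hY (by omega) _)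
  rw [hc, tzero u h₃ hY (by omega) c, comp_zero]

lemma tGE_ext {T : Triangle C} (hT : T ∈ distTriang C) {n : ℤ}
    (h₁ : u.ge n T.obj₁) (h₃ : u.ge n T.obj₃) : u.ge n T.obj₂ := by
  refine tGE_char u (fun X hX f => ?_)
  obtain ⟨c, hc⟩ := Triangle.coyoneda_exact₂ _ hT f (tzero u hX h₃ (by omega) _)
  rw [hc, tzero u hX h₁ (by omega) c, zero_comp]

lemma inUN_of {X : C} {n₁ n₂ : ℤ} (h₁ : u.ge n₁ X) (h₂ : u.le n₂ X) : InUN u X := by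
  refine ⟨n₁.natAbs + n₂.natAbs, u.ge_antitone ?_ _ h₁, u.le_monotone ?_ _ h₂⟩ <;> omega

lemma inUN_iso {X Y : C} (e : X ≅ Y) (h : InUN u X) : InUN u Y := by
  obtain ⟨n, h₁, h₂⟩ := h
  exact ⟨n, ObjectProperty.prop_of_iso _ e h₁, ObjectProperty.prop_of_iso _ e h₂⟩

lemma inUN_shift {X : C} (s : ℤ) (h : InUN u X) : InUN u (X⟦s⟧) := by
  obtain ⟨n, h₁, h₂⟩ := h
  exact inUN_of u (u.ge_shift _ s (-(n:ℤ) - s) (by ring) X h₁)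
    (u.le_shift _ s ((n:ℤ) - s) (by ring) X h₂)

lemma inUN_ext₂ {T : Triangle C} (hT : T ∈ distTriang C)
    (h₁ : InUN u T.obj₁) (h₃ : InUN u T.obj₃) : InUN u T.obj₂ := by
  obtain ⟨n, hn₁, hn₂⟩ := h₁
  obtain ⟨m, hm₁, hm₂⟩ := h₃
  exact inUN_of u
    (tGE_ext u hT (u.ge_antitone (min_le_left (-(n:ℤ)) (-(m:ℤ))) _ hn₁)
      (u.ge_antitone (min_le_right (-(n:ℤ)) (-(m:ℤ))) _ hm₁))
    (tLE_ext u hT (u.le_monotone (le_max_left (n:ℤ) (m:ℤ)) _ hn₂)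
      (u.le_monotone (le_max_right (n:ℤ) (m:ℤ)) _ hm₂))

lemma inUN_ext₃ {T : Triangle C} (hT : T ∈ distTriang C)
    (h₁ : InUN u T.obj₁) (h₂ : InUN u T.obj₂) : InUN u T.obj₃ :=
  inUN_ext₂ u (rot_of_distTriang _ hT) h₂ (inUN_shift u 1 h₁)

lemma inUN_ext₁ {T : Triangle C} (hT : T ∈ distTriang C)
    (h₂ : InUN u T.obj₂) (h₃ : InUN u T.obj₃) : InUN u T.obj₁ :=
  inUN_ext₂ u (inv_rot_of_distTriang _ hT) (inUN_shift u (-1) h₃) h₂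

end Aux
section RelAux

variable {t : TStructure C} (v : RelTStructure t)

lemma vLE_shift_iff (s n : ℤ) (X : C) : v.LE (s + n) X ↔ v.LE n (X⟦s⟧) := by
  constructor
  · intro h
    exact v.LE_shift (s + n) s n rfl X h
  · intro h
    exact v.LE_iso (s + n) ((shiftEquiv C s).unitIso.symm.app X)
      (v.LE_shift n (-s) (s + n) (by ring) _ h)

lemma vGE_shift_iff (s n : ℤ) (X : C) : v.GE (s + n) X ↔ v.GE n (X⟦s⟧) := by
  constructor
  · intro h
    exact v.GE_shift (s + n) s n rfl X h
  · intro h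
    exact v.GE_iso (s + n) ((shiftEquiv C s).unitIso.symm.app X)
      (v.GE_shift n (-s) (s + n) (by ring) _ h)

lemma vLE_mono {n n' : ℤ} (h : n ≤ n') {X : C} (hX : v.LE n X) : v.LE n' X := by
  have key : ∀ (k : ℕ) (m : ℤ) (Y : C), v.LE m Y → v.LE (m + k) Y := by
    intro k
    induction k with
    | zero => intro m Y hY; simpa using hY
    | succ k ih =>
        intro m Y hY
        have h1 : v.LE 1 (Y⟦m + k⟧) := v.LE_zero_le _ (((vLE_shift_iff v (m + k) 0 Y)).mp
          (by simpa using ih m Y hY))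
        have := (vLE_shift_iff v (m + k) 1 Y).mpr h1
        have e : m + k + 1 = m + (k + 1 : ℕ) := by push_cast; ring
        rwa [e] at this
  obtain ⟨k, hk⟩ : ∃ k : ℕ, n' = n + k := ⟨(n' - n).toNat, by omega⟩
  rw [hk]; exact key _ _ _ hX

lemma vGE_anti {n n' : ℤ} (h : n' ≤ n) {X : C} (hX : v.GE n X) : v.GE n' X := by
  have key : ∀ (k : ℕ) (m : ℤ) (Y : C), v.GE (m + k) Y → v.GE m Y := by
    intro k
    induction k with
    | zero => intro m Y hY; simpa using hY
    | succ k ih =>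
        intro m Y hY
        refine ih m Y ?_
        have h1 : v.GE 1 (Y⟦m + k⟧) := by
          have : v.GE (m + k + 1) Y := by
            have e : m + (k + 1 : ℕ) = m + k + 1 := by push_cast; ring
            rwa [e] at hY
          exact (vGE_shift_iff v (m + k) 1 Y).mp this
        have h2 := (vGE_shift_iff v (m + k) 0 Y).mpr (v.GE_one_le _ h1)
        simpa using h2
  obtain ⟨k, hk⟩ : ∃ k : ℕ, n = n' + k := ⟨(n - n').toNat, by omega⟩
  rw [hk] at hX; exact key _ _ _ hX

lemma vzero {X Y : C} {k l : ℤ} (hX : v.LE k X) (hY : v.GE l Y) (h : k < l)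
    (f : X ⟶ Y) : f = 0 := by
  have hX' : v.LE 0 (X⟦k⟧) := v.LE_shift k k 0 (add_zero k) X hX
  have hY' : v.GE (l - k) (Y⟦k⟧) := v.GE_shift l k (l - k) (by ring) Y hY
  have hY'' : v.GE 1 (Y⟦k⟧) := vGE_anti v (by omega) hY'
  have : (shiftFunctor C k).map f = 0 := v.zero' _ hX' hY''
  exact (shiftFunctor C k).map_eq_zero_iff.mp this

lemma vexists_triangle (A : C) (hA : InUN t A) (n₀ n₁ : ℤ) (hn : n₀ + 1 = n₁) :
    ∃ (X Y : C) (_ : v.LE n₀ X) (_ : v.GE n₁ Y) (f : X ⟶ A) (g : A ⟶ Y)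
      (h : Y ⟶ X⟦(1 : ℤ)⟧), Triangle.mk f g h ∈ distTriang C := by
  obtain ⟨X, Y, hX, hY, f, g, h, mem⟩ := v.exists_triangle (A⟦n₀⟧) (inUN_shift t n₀ hA)
  let T := (Triangle.shiftFunctor C (-n₀)).obj (Triangle.mk f g h)
  let e := (shiftEquiv C n₀).unitIso.symm.app A
  have hT' : Triangle.mk (T.mor₁ ≫ e.hom) (e.inv ≫ T.mor₂) T.mor₃ ∈ distTriang C := by
    refine isomorphic_distinguished _ (Triangle.shift_distinguished _ mem (-n₀)) _ ?_
    refine Triangle.isoMk _ _ (Iso.refl _) e.symm (Iso.refl _) ?_ ?_ ?_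
    all_goals dsimp; simp [T]
    · exact ((assoc _ _ _).trans ((congrArg (T.mor₁ ≫ ·) e.hom_inv_id).trans (comp_id _))).trans (id_comp _).symm
    · exact comp_id _
    · exact ((congrArg (T.mor₃ ≫ ·) ((shiftFunctor C (1:ℤ)).map_id _)).trans (comp_id _)).trans (id_comp _).symm
  exact ⟨_, _, v.LE_shift _ _ _ (neg_add_cancel n₀) _ hX,
    v.GE_shift _ _ _ (by omega) _ hY, _, _, _, hT'⟩

lemma vLE_char {n : ℤ} {X : C} (hX : InUN t X)
    (h : ∀ ⦃Y : C⦄, v.GE (n + 1) Y → ∀ f : X ⟶ Y, f = 0) : v.LE n X := by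
  obtain ⟨K, Q, hK, hQ, f, g, w, hT⟩ := vexists_triangle v X hX n (n + 1) rfl
  have hg : g = 0 := h hQ g
  obtain ⟨c, hc⟩ := Triangle.yoneda_exact₃ _ hT (𝟙 Q) (show g ≫ 𝟙 Q = 0 by simp [hg])
  have hc0 : c = 0 := vzero v (v.LE_shift n 1 (n - 1) (by ring) K hK) hQ (by omega) c
  have hQ0 : IsZero Q := by rw [IsZero.iff_id_eq_zero, hc, hc0, comp_zero]; rfl
  have : IsIso f := (Triangle.isZero₃_iff_isIso₁ _ hT).mp hQ0
  exact v.LE_iso n (asIso f) hK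

lemma vGE_char {n : ℤ} {Y : C} (hY : InUN t Y)
    (h : ∀ ⦃X : C⦄, v.LE (n - 1) X → ∀ f : X ⟶ Y, f = 0) : v.GE n Y := by
  obtain ⟨K, Q, hK, hQ, f, g, w, hT⟩ := vexists_triangle v Y hY (n - 1) n (by ring)
  have hf : f = 0 := h hK f
  obtain ⟨c, hc⟩ := Triangle.coyoneda_exact₂ _ (inv_rot_of_distTriang _ hT) (𝟙 K)
    (show 𝟙 K ≫ f = 0 by rw [hf, comp_zero])
  have hc0 : c = 0 := vzero v hK (v.GE_shift n (-1) (n + 1) (by ring) Q hQ) (by omega) c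
  have hK0 : IsZero K := by rw [IsZero.iff_id_eq_zero, hc, hc0, zero_comp]; rfl
  have : IsIso g := (Triangle.isZero₁_iff_isIso₂ _ hT).mp hK0
  exact v.GE_iso n (asIso g).symm hQ

end RelAux
set_option linter.unusedSectionVars false
section Glue

lemma zero_of_shift_src {P Z : C} (h : ∀ f : P ⟶ Z, f = 0)
    (ψ : ((P⟦(1:ℤ)⟧)⟦(-1:ℤ)⟧ : C) ⟶ Z) : ψ = 0 := by
  have e := (shiftEquiv C (1:ℤ)).unitIso.app P
  have h1 : e.hom ≫ ψ = 0 := h _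
  have h2 : e.inv ≫ (e.hom ≫ ψ) = 0 := by rw [h1, comp_zero]
  exact (Iso.inv_hom_id_assoc e ψ).symm.trans h2

lemma shifted_factor {T : Triangle C} (hT : T ∈ distTriang C) {Z : C}
    (φ : (T.obj₂⟦(-1:ℤ)⟧ : C) ⟶ Z) (hφ : T.mor₁⟦(-1:ℤ)⟧' ≫ φ = 0) :
    ∃ ψ : (T.obj₃⟦(-1:ℤ)⟧ : C) ⟶ Z, φ = T.mor₂⟦(-1:ℤ)⟧' ≫ ψ := by
  have hS := Triangle.shift_distinguished T hT (-1)
  obtain ⟨ψ, hψ⟩ : ∃ ψ : (T.obj₃⟦(-1:ℤ)⟧ : C) ⟶ Z,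
      φ = ((-1:ℤ).negOnePow • T.mor₂⟦(-1:ℤ)⟧') ≫ ψ :=
    Triangle.yoneda_exact₂ _ hS φ (show ((-1:ℤ).negOnePow • T.mor₁⟦(-1:ℤ)⟧') ≫ φ = 0 by
    rw [Linear.units_smul_comp, hφ, smul_zero])
  refine ⟨(-1:ℤ).negOnePow • ψ, ?_⟩
  rw [hψ]
  rw [Linear.units_smul_comp, Linear.comp_units_smul]

/-- Gluing a truncation triangle of `B` with a quotient `Q` of `A` by `B`. -/
lemma glue₁ {X B Y A Q : C} (f : X ⟶ B) (p : B ⟶ Y) (d1 : Y ⟶ X⟦(1:ℤ)⟧)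
    (hT1 : Triangle.mk f p d1 ∈ distTriang C)
    (i : B ⟶ A) (g : A ⟶ Q) (d2 : Q ⟶ B⟦(1:ℤ)⟧)
    (hT2 : Triangle.mk i g d2 ∈ distTriang C) :
    ∃ (Y' : C) (g' : A ⟶ Y') (d3 : Y' ⟶ X⟦(1:ℤ)⟧),
      (Triangle.mk (f ≫ i) g' d3 ∈ distTriang C) ∧
      ∀ (Z : C), (∀ h : Z ⟶ Y, h = 0) → (∀ h : Z ⟶ Q, h = 0) →
        (∀ h : Z ⟶ Y', h = 0) := by
  obtain ⟨Y', g', d3, hT⟩ := distinguished_cocone_triangle (f ≫ i)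
  refine ⟨Y', g', d3, hT, fun Z hY hQ ζ => ?_⟩
  have hδ0 : (ζ ≫ d3) ≫ (f ≫ i)⟦(1:ℤ)⟧' = 0 := by
    have h31 : d3 ≫ (f ≫ i)⟦(1:ℤ)⟧' = 0 := comp_distTriang_mor_zero₃₁ _ hT
    rw [assoc, h31, comp_zero]
  have hδf : (ζ ≫ d3) ≫ f⟦(1:ℤ)⟧' = 0 := by
    have h2 : ((ζ ≫ d3) ≫ f⟦(1:ℤ)⟧') ≫ i⟦(1:ℤ)⟧' = 0 := by
      simpa only [assoc, ← Functor.map_comp] using hδ0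
    obtain ⟨c, hc⟩ : ∃ c : Z ⟶ Q, (ζ ≫ d3) ≫ f⟦(1:ℤ)⟧' = c ≫ d2 := Triangle.coyoneda_exact₁ _ hT2 ((ζ ≫ d3) ≫ f⟦(1:ℤ)⟧') h2
    rw [hc, hQ c, zero_comp]
  have hδ : ζ ≫ d3 = 0 := by
    obtain ⟨c, hc⟩ : ∃ c : Z ⟶ Y, ζ ≫ d3 = c ≫ d1 := Triangle.coyoneda_exact₁ _ hT1 (ζ ≫ d3) hδf
    rw [hc, hY c, zero_comp]
  obtain ⟨η, hη⟩ : ∃ η : Z ⟶ A, ζ = η ≫ g' := Triangle.coyoneda_exact₃ _ hT ζ hδ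
  have hηg : η ≫ g = 0 := hQ _
  obtain ⟨η₁, hη₁⟩ : ∃ η₁ : Z ⟶ B, η = η₁ ≫ i := Triangle.coyoneda_exact₂ _ hT2 η hηg
  have hη₁p : η₁ ≫ p = 0 := hY _
  obtain ⟨η₂, hη₂⟩ : ∃ η₂ : Z ⟶ X, η₁ = η₂ ≫ f := Triangle.coyoneda_exact₂ _ hT1 η₁ hη₁p
  have h12 : (f ≫ i) ≫ g' = 0 := comp_distTriang_mor_zero₁₂ _ hT
  rw [hη, hη₁, hη₂]
  rw [assoc, assoc, ← assoc f i g', h12, comp_zero]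

/-- Gluing a truncation triangle of a quotient `B` of `A` with a sub `P` of `A`. -/
lemma glue₂ {P A B XB Y : C} (e : P ⟶ A) (g : A ⟶ B) (d1 : B ⟶ P⟦(1:ℤ)⟧)
    (hT1 : Triangle.mk e g d1 ∈ distTriang C)
    (f : XB ⟶ B) (q : B ⟶ Y) (d2 : Y ⟶ XB⟦(1:ℤ)⟧)
    (hT2 : Triangle.mk f q d2 ∈ distTriang C) :
    ∃ (X' : C) (i' : X' ⟶ A) (d3 : Y ⟶ X'⟦(1:ℤ)⟧),
      (Triangle.mk i' (g ≫ q) d3 ∈ distTriang C) ∧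
      ∀ (Z : C), (∀ h : P ⟶ Z, h = 0) → (∀ h : XB ⟶ Z, h = 0) →
        (∀ h : X' ⟶ Z, h = 0) := by
  obtain ⟨X', i', d3, hT⟩ := distinguished_cocone_triangle₁ (g ≫ q)
  refine ⟨X', i', d3, hT, fun Z hP hXB ξ => ?_⟩
  have h23 : (g ≫ q) ≫ d3 = 0 := comp_distTriang_mor_zero₂₃ _ hT
  have hgφ : g⟦(-1:ℤ)⟧' ≫ ((q ≫ d3)⟦(-1:ℤ)⟧' ≫
      ((shiftFunctorCompIsoId C (1:ℤ) (-1:ℤ) (by omega)).hom.app X' ≫ ξ)) = 0 := by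
    have h' : g ≫ q ≫ d3 = 0 := by rw [← assoc]; exact h23
    rw [← assoc, ← Functor.map_comp, h']
    simp
  have hrot1 : (Triangle.mk e g d1).rotate ∈ distTriang C := rot_of_distTriang _ hT1
  obtain ⟨ψ, hψ⟩ := shifted_factor hrot1 _ hgφ
  have hψ0 : ψ = 0 := zero_of_shift_src hP ψ
  have hφ0 : (q ≫ d3)⟦(-1:ℤ)⟧' ≫ ((shiftFunctorCompIsoId C (1:ℤ) (-1:ℤ) (by omega)).hom.app X' ≫ ξ) = 0 := by
    rw [hψ, hψ0, comp_zero]; rfl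
  have hrot2 : (Triangle.mk f q d2).rotate ∈ distTriang C := rot_of_distTriang _ hT2
  have hqν : q⟦(-1:ℤ)⟧' ≫ (d3⟦(-1:ℤ)⟧' ≫
      ((shiftFunctorCompIsoId C (1:ℤ) (-1:ℤ) (by omega)).hom.app X' ≫ ξ)) = 0 := by
    rw [← assoc, ← Functor.map_comp]
    exact hφ0
  obtain ⟨ψ₂, hψ₂⟩ := shifted_factor hrot2 _ hqν
  have hψ₂0 : ψ₂ = 0 := zero_of_shift_src hXB ψ₂
  have hν : d3⟦(-1:ℤ)⟧' ≫ ((shiftFunctorCompIsoId C (1:ℤ) (-1:ℤ) (by omega)).hom.app X' ≫ ξ) = 0 := by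
    rw [hψ₂, hψ₂0, comp_zero]; rfl
  have hw : (Triangle.mk i' (g ≫ q) d3).invRotate.mor₁ ≫ ξ = 0 := by
    show (-(d3⟦(-1:ℤ)⟧' ≫ (shiftFunctorCompIsoId C (1:ℤ) (-1:ℤ) (by omega)).hom.app X')) ≫ ξ = 0
    rw [Preadditive.neg_comp, assoc, hν, neg_zero]
  obtain ⟨η, hη⟩ : ∃ η : A ⟶ Z, ξ = i' ≫ η := Triangle.yoneda_exact₂ _ (inv_rot_of_distTriang _ hT) ξ hw
  have heη : e ≫ η = 0 := hP _
  obtain ⟨η₁, hη₁⟩ : ∃ η₁ : B ⟶ Z, η = g ≫ η₁ := Triangle.yoneda_exact₂ _ hT1 η heη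
  have hig : (i' ≫ g) ≫ q = 0 := by
    rw [assoc]
    exact comp_distTriang_mor_zero₁₂ _ hT
  obtain ⟨θ, hθ⟩ : ∃ θ : X' ⟶ XB, i' ≫ g = θ ≫ f := Triangle.coyoneda_exact₂ _ hT2 (i' ≫ g) hig
  have hξ : ξ = i' ≫ η := hη
  rw [hξ, hη₁]
  rw [← assoc, hθ]
  rw [assoc, hXB (f ≫ η₁), comp_zero]

end Glue
section Construct

lemma leOfEq (u : TStructure C) {m m' : ℤ} (h : m = m') {X : C} (hX : u.le m X) :
    u.le m' X := by subst h; exact hX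

lemma geOfEq (u : TStructure C) {m m' : ℤ} (h : m = m') {X : C} (hX : u.ge m X) :
    u.ge m' X := by subst h; exact hX

lemma vleOfEq {t : TStructure C} (v : RelTStructure t) {m m' : ℤ} (h : m = m') {X : C}
    (hX : v.LE m X) : v.LE m' X := by subst h; exact hX

lemma vgeOfEq {t : TStructure C} (v : RelTStructure t) {m m' : ℤ} (h : m = m') {X : C}
    (hX : v.GE m X) : v.GE m' X := by subst h; exact hX

variable (t : TStructure C) (v : RelTStructure t)

/-- Shifted version of the lower distance bound. -/
lemma hLa' (a : ℤ) (hLa : ∀ X : C, InUN t X → t.le a X → v.LE 0 X)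
    (n : ℤ) (X : C) (hX : InUN t X) (h : t.le (a + n) X) : v.LE n X := by
  have h1 : t.le a (X⟦n⟧) := (tLE_shift_iff t n a X).mp (leOfEq t (by ring) h)
  have h2 : v.LE 0 (X⟦n⟧) := hLa _ (inUN_shift t n hX) h1
  exact vleOfEq v (by ring) ((vLE_shift_iff v n 0 X).mpr h2)

lemma hLb' (b : ℤ) (hLb : ∀ X : C, v.LE 0 X → t.le b X)
    (n : ℤ) (X : C) (h : v.LE n X) : t.le (b + n) X := by
  have h1 : v.LE 0 (X⟦n⟧) := (vLE_shift_iff v n 0 X).mp (vleOfEq v (by ring) h)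
  have h2 : t.le b (X⟦n⟧) := hLb _ h1
  exact leOfEq t (by ring) ((tLE_shift_iff t n b X).mpr h2)

/-- `v.GE 1 ⊆ t.ge (a+1)`. -/
lemma hGE1 (a : ℤ) (hLa : ∀ X : C, InUN t X → t.le a X → v.LE 0 X)
    (Y : C) (hY : v.GE 1 Y) : t.ge (a + 1) Y := by
  obtain ⟨n, hYge, hYle⟩ := v.GE_mem 1 Y hY
  obtain ⟨K, Q, hK, hQ, f, g, w, hT⟩ := t.exists_triangle Y a (a + 1) rfl
  have hQ1 : t.ge (a + 2) ((Q⟦(-1:ℤ)⟧ : C)) := t.ge_shift (a + 1) (-1) (a + 2) (by ring) Q hQ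
  have hKge : t.ge (min (a + 2) (-(n:ℤ))) K :=
    tGE_ext t (inv_rot_of_distTriang _ hT)
      (t.ge_antitone (min_le_left _ _) _ hQ1)
      (t.ge_antitone (min_le_right _ _) _ hYge)
  have hKUN : InUN t K := inUN_of t hKge hK
  have hK0 : v.LE 0 K := hLa K hKUN hK
  have hf : f = 0 := vzero v hK0 hY (by omega) f
  obtain ⟨c, hc⟩ := Triangle.coyoneda_exact₂ _ (inv_rot_of_distTriang _ hT) (𝟙 K)
    (show 𝟙 K ≫ f = 0 by rw [hf, comp_zero])
  have hc0 : c = 0 := tzero t hK hQ1 (by omega) c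
  have hK0' : IsZero K := by rw [IsZero.iff_id_eq_zero, hc, hc0, zero_comp]; rfl
  have : IsIso g := (Triangle.isZero₁_iff_isIso₂ _ hT).mp hK0'
  exact ObjectProperty.prop_of_iso (t.ge (a + 1)) (asIso g).symm hQ

lemma hGEn (a : ℤ) (hLa : ∀ X : C, InUN t X → t.le a X → v.LE 0 X)
    (n : ℤ) (Y : C) (hY : v.GE n Y) : t.ge (a + n) Y := by
  have h1 : v.GE 1 (Y⟦n - 1⟧) := (vGE_shift_iff v (n - 1) 1 Y).mp (vgeOfEq v (by ring) hY)
  have h2 : t.ge (a + 1) (Y⟦n - 1⟧) := hGE1 t v a hLa _ h1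
  exact geOfEq t (by ring) ((tGE_shift_iff t (n - 1) (a + 1) Y).mpr h2)

/-- The `≤`-classes of the extended t-structure. -/
def VLE (b : ℤ) (n : ℤ) (X : C) : Prop :=
  t.le (b + n) X ∧ ∀ ⦃Y : C⦄, v.GE (n + 1) Y → ∀ f : X ⟶ Y, f = 0

/-- The `≥`-classes of the extended t-structure. -/
def VGE (a : ℤ) (n : ℤ) (Y : C) : Prop :=
  t.ge (a - 1 + n) Y ∧ ∀ ⦃X : C⦄, v.LE (n - 1) X → ∀ f : X ⟶ Y, f = 0

/-- The extension of a bounded t-structure at finite distance to the whole category. -/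
def Vstruct (a b : ℤ) (hab : a ≤ b)
    (hLa : ∀ X : C, InUN t X → t.le a X → v.LE 0 X)
    (hLb : ∀ X : C, v.LE 0 X → t.le b X) : TStructure C where
  le := VLE t v b
  ge := VGE t v a
  le_isClosedUnderIsomorphisms n :=
    { of_iso := fun e hX => ⟨ObjectProperty.prop_of_iso _ e hX.1, fun Y hY f => by
        have h0 : e.hom ≫ f = 0 := hX.2 hY _
        calc f = e.inv ≫ (e.hom ≫ f) := by simp
        _ = 0 := by rw [h0, comp_zero]⟩ }
  ge_isClosedUnderIsomorphisms n :=
    { of_iso := fun e hY => ⟨ObjectProperty.prop_of_iso _ e hY.1, fun X hX f => by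
        have h0 : f ≫ e.inv = 0 := hY.2 hX _
        calc f = (f ≫ e.inv) ≫ e.hom := by simp
        _ = 0 := by rw [h0, zero_comp]⟩ }
  le_shift n s n' hs X hX := by
    refine ⟨(tLE_shift_iff t s (b + n') X).mp (leOfEq t (by omega) hX.1), fun Y hY f => ?_⟩
    have hY' : v.GE (n + 1) ((Y⟦(-s)⟧ : C)) :=
      (vGE_shift_iff v (-s) (n + 1) Y).mp (vgeOfEq v (by omega) hY)
    have h0 : (shiftEquiv C s).unitIso.hom.app X ≫ f⟦(-s)⟧' = 0 := hX.2 hY' _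
    have h1 : f⟦(-s)⟧' = 0 := by
      exact (cancel_epi ((shiftEquiv C s).unitIso.hom.app X)).mp (h0.trans comp_zero.symm)
    exact (shiftFunctor C (-s)).map_eq_zero_iff.mp h1
  ge_shift n s n' hs Y hY := by
    refine ⟨(tGE_shift_iff t s (a - 1 + n') Y).mp (geOfEq t (by omega) hY.1), fun X hX f => ?_⟩
    have hX' : v.LE (n - 1) ((X⟦(-s)⟧ : C)) :=
      (vLE_shift_iff v (-s) (n - 1) X).mp (vleOfEq v (by omega) hX)
    have h0 : f⟦(-s)⟧' ≫ (shiftEquiv C s).unitIso.inv.app Y = 0 := hY.2 hX' _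
    have h1 : f⟦(-s)⟧' = 0 := by
      exact (cancel_mono ((shiftEquiv C s).unitIso.inv.app Y)).mp (h0.trans zero_comp.symm)
    exact (shiftFunctor C (-s)).map_eq_zero_iff.mp h1
  zero' X Y f hX hY := by
    obtain ⟨K, Q, hK, hQ, u', q', w', hTK⟩ := t.exists_triangle Y b (b + 1) rfl
    have hfq : f ≫ q' = 0 := tzero t (leOfEq t (by ring) hX.1) hQ (by omega) _
    obtain ⟨g, hg⟩ := Triangle.coyoneda_exact₂ _ hTK f hfq
    have hQ1 : t.ge (b + 2) ((Q⟦(-1:ℤ)⟧ : C)) := t.ge_shift (b + 1) (-1) (b + 2) (by ring) Q hQ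
    have hKge : t.ge (min (b + 2) (a - 1 + 1)) K :=
      tGE_ext t (inv_rot_of_distTriang _ hTK)
        (t.ge_antitone (min_le_left _ _) _ hQ1)
        (t.ge_antitone (min_le_right _ _) _ hY.1)
    have hKUN : InUN t K := inUN_of t hKge hK
    have hK1 : v.GE 1 K := by
      refine vGE_char v hKUN (fun Z hZ ζ => ?_)
      have hζu : ζ ≫ u' = 0 := hY.2 hZ _
      obtain ⟨z, hz⟩ := Triangle.coyoneda_exact₂ _ (inv_rot_of_distTriang _ hTK) ζ hζu
      have hz0 : z = 0 := tzero t (hLb' t v b hLb (1 - 1) Z hZ) hQ1 (by omega) z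
      rw [hz, hz0, zero_comp]; rfl
    have hg0 : g = 0 := hX.2 (vgeOfEq v (by ring) hK1) g
    rw [hg, hg0, zero_comp]; rfl
  le_zero_le X hX :=
    ⟨t.le_monotone (by omega) _ hX.1, fun Y hY f => hX.2 (vGE_anti v (by omega) hY) f⟩
  ge_one_le X hX :=
    ⟨t.ge_antitone (by omega) _ hX.1, fun Z hZ f => hX.2 (vLE_mono v (by omega) hZ) f⟩
  exists_triangle_zero_one A := by
    obtain ⟨A₁, A₂, hA₁, hA₂, al, be, dA, hTA⟩ := t.exists_triangle A b (b + 1) rfl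
    obtain ⟨P, M, hP, hM, pi, qM, rM, hTP⟩ := t.exists_triangle A₁ (a - 1) a (by ring)
    have hPle : t.le b ((P⟦(1:ℤ)⟧ : C)) :=
      t.le_monotone (by omega) _ (t.le_shift (a - 1) 1 (a - 2) (by ring) P hP)
    have hMle : t.le b M := tLE_ext t (rot_of_distTriang _ hTP) hA₁ hPle
    have hMUN : InUN t M := inUN_of t hM hMle
    obtain ⟨M₁, M₂, hM₁, hM₂, sM, tM, uM, hTM⟩ := v.exists_triangle M hMUN
    obtain ⟨X', i', d3, hTX, hXprop⟩ := glue₂ pi qM rM hTP sM tM uM hTM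
    obtain ⟨Y', g', d4, hTY, hYprop⟩ := glue₁ i' (qM ≫ tM) d3 hTX al be dA hTA
    have hM₂ge : t.ge (a + 1) M₂ := hGE1 t v a hLa M₂ hM₂
    have hM₁le : t.le b M₁ := leOfEq t (by ring) (hLb' t v b hLb 0 M₁ hM₁)
    have hX'le : VLE t v b 0 X' := by
      constructor
      · refine leOfEq t (show b = b + 0 by ring) (tLE_char t (fun Z hZ ζ => ?_))
        exact hXprop Z (fun h => tzero t hP hZ (by omega) h)
          (fun h => tzero t hM₁le hZ (by omega) h) ζ
      · intro Y hY f
        refine hXprop Y (fun h => tzero t hP (hGEn t v a hLa (0 + 1) Y hY) (by omega) h)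
          (fun h => vzero v hM₁ hY (by omega) h) f
    have hY'ge : VGE t v a 1 Y' := by
      constructor
      · refine tGE_char t (fun Z hZ ζ => ?_)
        exact hYprop Z (fun h => tzero t hZ hM₂ge (by omega) h)
          (fun h => tzero t hZ hA₂ (by omega) h) ζ
      · intro Z hZ f
        refine hYprop Z (fun h => vzero v hZ hM₂ (by omega) h)
          (fun h => tzero t (hLb' t v b hLb (1 - 1) Z hZ) hA₂ (by omega) h) f
    exact ⟨X', Y', hX'le, hY'ge, i' ≫ al, g', d4, hTY⟩

end Construct
section Dist

lemma distAtMost_of_lt_top {u V : TStructure C} (h : dist u V < ⊤) :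
    ∃ d : ℕ, DistAtMost u V d := by
  by_contra hc
  push_neg at hc
  have he : {e : ℕ∞ | ∃ d : ℕ, e = d ∧ DistAtMost u V d} = ∅ := by
    ext e
    simp only [Set.mem_setOf_eq, Set.mem_empty_iff_false, iff_false, not_exists]
    rintro d ⟨rfl, hd⟩
    exact hc d hd
  rw [dist, he, sInf_empty] at h
  exact lt_irrefl _ h

lemma lt_top_of_distAtMost {u V : TStructure C} {d : ℕ} (h : DistAtMost u V d) :
    dist u V < ⊤ := by
  have hm : (d : ℕ∞) ∈ {e : ℕ∞ | ∃ d' : ℕ, e = d' ∧ DistAtMost u V d'} := ⟨d, rfl, h⟩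
  exact (sInf_le hm).trans_lt (WithTop.coe_lt_top d)

lemma distAtMostRel_of_lt_top {u : TStructure C} {v : RelTStructure u}
    (h : distRel u v < ⊤) : ∃ d : ℕ, DistAtMostRel u v d := by
  by_contra hc
  push_neg at hc
  have he : {e : ℕ∞ | ∃ d : ℕ, e = d ∧ DistAtMostRel u v d} = ∅ := by
    ext e
    simp only [Set.mem_setOf_eq, Set.mem_empty_iff_false, iff_false, not_exists]
    rintro d ⟨rfl, hd⟩
    exact hc d hd
  rw [distRel, he, sInf_empty] at h
  exact lt_irrefl _ h

lemma lt_top_of_distAtMostRel {u : TStructure C} {v : RelTStructure u} {d : ℕ}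
    (h : DistAtMostRel u v d) : distRel u v < ⊤ := by
  have hm : (d : ℕ∞) ∈ {e : ℕ∞ | ∃ d' : ℕ, e = d' ∧ DistAtMostRel u v d'} := ⟨d, rfl, h⟩
  exact (sInf_le hm).trans_lt (WithTop.coe_lt_top d)

lemma bounds_of_distAtMost {u V : TStructure C} {d : ℕ} (h : DistAtMost u V d) :
    ∃ aV bV : ℤ, (∀ X : C, u.le aV X → V.le 0 X) ∧ (∀ X : C, V.le 0 X → u.le bV X) := by
  obtain ⟨m, h₁, h₂⟩ := h
  refine ⟨-(m + d), -m, fun X hX => ?_, fun X hX => ?_⟩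
  · have h3 : u.le 0 ((X⟦-(m + (d:ℤ))⟧ : C)) :=
      (tLE_shift_iff u (-(m + (d:ℤ))) 0 X).mp (leOfEq u (by ring) hX)
    have h4 := h₂ _ h3
    exact leOfEq V (by ring) ((tLE_shift_iff V (-(m + (d:ℤ))) (m + d) X).mpr h4)
  · have h3 : V.le m ((X⟦-m⟧ : C)) := (tLE_shift_iff V (-m) m X).mp (leOfEq V (by ring) hX)
    have h4 := h₁ _ h3
    exact leOfEq u (by ring) ((tLE_shift_iff u (-m) 0 X).mpr h4)

lemma bounds_of_distAtMostRel {u : TStructure C} {v : RelTStructure u} {d : ℕ}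
    (h : DistAtMostRel u v d) :
    ∃ a b : ℤ, a ≤ b ∧ (∀ X : C, InUN u X → u.le a X → v.LE 0 X) ∧
      (∀ X : C, v.LE 0 X → u.le b X) := by
  obtain ⟨m, h₁, h₂⟩ := h
  refine ⟨-(m + d), -m, by omega, fun X hUN hX => ?_, fun X hX => ?_⟩
  · have h3 : u.le 0 ((X⟦-(m + (d:ℤ))⟧ : C)) :=
      (tLE_shift_iff u (-(m + (d:ℤ))) 0 X).mp (leOfEq u (by ring) hX)
    have h4 := h₂ _ (inUN_shift u _ hUN) h3
    exact vleOfEq v (by ring) ((vLE_shift_iff v (-(m + (d:ℤ))) (m + d) X).mpr h4)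
  · have h3 : v.LE m ((X⟦-m⟧ : C)) := (vLE_shift_iff v (-m) m X).mp (vleOfEq v (by ring) hX)
    have h4 := h₁ _ h3
    exact leOfEq u (by ring) ((tLE_shift_iff u (-m) 0 X).mpr h4)

lemma subGEbound (u V : TStructure C) (aV : ℤ)
    (h : ∀ X : C, u.le aV X → V.le 0 X) (Y : C) (hY : V.ge 1 Y) : u.ge (aV + 1) Y :=
  tGE_char u (fun Z hZ f => tzero V (h Z (leOfEq u (by ring) hZ)) hY (by omega) f)

/-- The restriction of a t-structure at finite distance to `T^b = U_ℕ`. -/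
def restrictRel (u : TStructure C) (V : TStructure C) (hV : dist u V < ⊤) :
    RelTStructure u where
  LE n X := V.le n X ∧ InUN u X
  GE n X := V.ge n X ∧ InUN u X
  LE_mem _ _ h := h.2
  GE_mem _ _ h := h.2
  LE_iso n X Y e h := ⟨ObjectProperty.prop_of_iso _ e h.1, inUN_iso u e h.2⟩
  GE_iso n X Y e h := ⟨ObjectProperty.prop_of_iso _ e h.1, inUN_iso u e h.2⟩
  LE_shift n s n' hs X h := ⟨V.le_shift n s n' hs X h.1, inUN_shift u s h.2⟩
  GE_shift n s n' hs X h := ⟨V.ge_shift n s n' hs X h.1, inUN_shift u s h.2⟩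
  zero' X Y f hX hY := V.zero' f hX.1 hY.1
  LE_zero_le X h := ⟨V.le_zero_le _ h.1, h.2⟩
  GE_one_le X h := ⟨V.ge_one_le _ h.1, h.2⟩
  exists_triangle A hA := by
    obtain ⟨d, hd⟩ := distAtMost_of_lt_top hV
    obtain ⟨aV, bV, h₁, h₂⟩ := bounds_of_distAtMost hd
    obtain ⟨X, Y, hX, hY, f, g, h, hT⟩ := V.exists_triangle_zero_one A
    have hYge : u.ge (aV + 1) Y := subGEbound u V aV h₁ Y hY
    have hXle : u.le bV X := h₂ X hX
    obtain ⟨nA, hA1, hA2⟩ := hA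
    have hXUN : InUN u X := inUN_of u
      (tGE_ext u (inv_rot_of_distTriang _ hT)
        (u.ge_antitone (min_le_left (aV + 2) (-(nA:ℤ))) _
          (u.ge_shift (aV + 1) (-1) (aV + 2) (by ring) Y hYge))
        (u.ge_antitone (min_le_right _ _) _ hA1)) hXle
    have hYUN : InUN u Y := inUN_of u hYge
      (tLE_ext u (rot_of_distTriang _ hT)
        (u.le_monotone (le_max_left (nA:ℤ) (bV - 1)) _ hA2)
        (u.le_monotone (le_max_right _ _) _ (u.le_shift bV 1 (bV - 1) (by ring) X hXle)))
    exact ⟨X, Y, ⟨hX, hXUN⟩, ⟨hY, hYUN⟩, f, g, h, hT⟩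

lemma restrict_distRel (u : TStructure C) (V : TStructure C) (hV : dist u V < ⊤) :
    distRel u (restrictRel u V hV) < ⊤ := by
  obtain ⟨d, m, h₁, h₂⟩ := distAtMost_of_lt_top hV
  exact lt_top_of_distAtMostRel (d := d)
    ⟨m, fun X hX => h₁ X hX.1, fun X hUN hX => ⟨h₂ X hX, hUN⟩⟩

variable (t : TStructure C) (v : RelTStructure t)

lemma Vstruct_resLE (a b : ℤ) (hab : a ≤ b)
    (hLa : ∀ X : C, InUN t X → t.le a X → v.LE 0 X)
    (hLb : ∀ X : C, v.LE 0 X → t.le b X) (n : ℤ) (X : C) :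
    v.LE n X ↔ ((Vstruct t v a b hab hLa hLb).le n X ∧ InUN t X) := by
  constructor
  · intro h
    exact ⟨⟨hLb' t v b hLb n X h, fun Y hY f => vzero v h hY (by omega) f⟩, v.LE_mem n X h⟩
  · rintro ⟨⟨h1, h2⟩, hUN⟩
    exact vLE_char v hUN h2

lemma Vstruct_resGE (a b : ℤ) (hab : a ≤ b)
    (hLa : ∀ X : C, InUN t X → t.le a X → v.LE 0 X)
    (hLb : ∀ X : C, v.LE 0 X → t.le b X) (n : ℤ) (X : C) :
    v.GE n X ↔ ((Vstruct t v a b hab hLa hLb).ge n X ∧ InUN t X) := by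
  constructor
  · intro h
    refine ⟨⟨t.ge_antitone (by omega) _ (hGEn t v a hLa n X h),
      fun Z hZ f => vzero v hZ h (by omega) f⟩, v.GE_mem n X h⟩
  · rintro ⟨⟨h1, h2⟩, hUN⟩
    exact vGE_char v hUN h2

lemma Vstruct_dist (a b : ℤ) (hab : a ≤ b)
    (hLa : ∀ X : C, InUN t X → t.le a X → v.LE 0 X)
    (hLb : ∀ X : C, v.LE 0 X → t.le b X) :
    DistAtMost t (Vstruct t v a b hab hLa hLb) ((b - a).toNat) := by
  refine ⟨-b, fun X hX => ?_, fun X hX => ?_⟩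
  · exact leOfEq t (by ring) hX.1
  · constructor
    · exact t.le_monotone (by omega) _ hX
    · intro Y hY f
      exact tzero t hX (hGEn t v a hLa _ Y hY) (by omega) f

lemma tstructure_ext {u w : TStructure C} (hLE : u.le = w.le) (hGE : u.ge = w.ge) :
    u = w := by
  rcases u with ⟨LE1, GE1, p1, p2, p3, p4, p5, p6, p7, p8⟩
  rcases w with ⟨LE2, GE2, q1, q2, q3, q4, q5, q6, q7, q8⟩
  obtain rfl : LE1 = LE2 := hLE
  obtain rfl : GE1 = GE2 := hGE
  rfl

lemma reltstructure_ext {u : TStructure C} {v w : RelTStructure u}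
    (hLE : v.LE = w.LE) (hGE : v.GE = w.GE) : v = w := by
  rcases v with ⟨LE1, GE1, p1, p2, p3, p4, p5, p6, p7, p8, p9, p10⟩
  rcases w with ⟨LE2, GE2, q1, q2, q3, q4, q5, q6, q7, q8, q9, q10⟩
  obtain rfl : LE1 = LE2 := hLE
  obtain rfl : GE1 = GE2 := hGE
  rfl

/-- Key step for injectivity. -/
lemma LE_zero_sub (V W : TStructure C) (aW bV bW : ℤ)
    (hV₂ : ∀ X : C, V.le 0 X → t.le bV X)
    (hW₁ : ∀ X : C, t.le aW X → W.le 0 X)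
    (hW₂ : ∀ X : C, W.le 0 X → t.le bW X)
    (hres : ∀ X : C, W.ge 1 X ∧ InUN t X → V.ge 1 X)
    (X : C) (hX : V.le 0 X) : W.le 0 X := by
  refine tLE_char W (fun Y hY f => ?_)
  have hY1 : W.ge 1 Y := geOfEq W (by ring) hY
  obtain ⟨K, Q, hK, hQ, u', q', w', hT⟩ :=
    t.exists_triangle Y (max bV bW) (max bV bW + 1) rfl
  have hfq : f ≫ q' = 0 := tzero t (hV₂ X hX) hQ (by omega) _
  obtain ⟨g, hg⟩ := Triangle.coyoneda_exact₂ _ hT f hfq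
  have hQ1 : t.ge (max bV bW + 2) ((Q⟦(-1:ℤ)⟧ : C)) :=
    t.ge_shift (max bV bW + 1) (-1) (max bV bW + 2) (by ring) Q hQ
  have hKW : W.ge 1 K := tGE_ext W (inv_rot_of_distTriang _ hT)
    (tGE_char W (fun Z hZ h =>
      tzero t (hW₂ Z (leOfEq W (by ring) hZ)) hQ1 (by omega) h)) hY1
  have hYge : t.ge (aW + 1) Y := subGEbound t W aW hW₁ Y hY1
  have hKUN : InUN t K := inUN_of t
    (tGE_ext t (inv_rot_of_distTriang _ hT)
      (t.ge_antitone (min_le_left (max bV bW + 2) (aW + 1)) _ hQ1)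
      (t.ge_antitone (min_le_right _ _) _ hYge)) hK
  have hKV : V.ge 1 K := hres K ⟨hKW, hKUN⟩
  have hg0 : g = 0 := tzero V hX hKV (by omega) g
  rw [hg, hg0, zero_comp]; rfl

end Dist
/-- Keller. The assignment `V ↦ V^b`, sending a t-structure `V` on `T` to
its restriction `V^b = (V_{≤0} ∩ T^b, V_{≥0} ∩ T^b)` on `T^b = U_ℕ`, is a bijection from the
set of t-structures `V` on `T` with `d(U,V) < +∞` onto the set of t-structures `V'` on `T^b`
with `d(U^b,V') < +∞`. -/
theorem statement18 (t : TStructure C) :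
    ∃ F : {V : TStructure C // dist t V < ⊤} → {V' : RelTStructure t // distRel t V' < ⊤},
      (∀ V, ∀ (n : ℤ) (X : C),
        ((F V).1.LE n X ↔ V.1.le n X ∧ InUN t X) ∧
        ((F V).1.GE n X ↔ V.1.ge n X ∧ InUN t X)) ∧
      Function.Bijective F := by
  refine ⟨fun V => ⟨restrictRel t V.1 V.2, restrict_distRel t V.1 V.2⟩,
    fun V n X => ⟨Iff.rfl, Iff.rfl⟩, ?_, ?_⟩
  · -- injectivity
    rintro ⟨V, hV⟩ ⟨W, hW⟩ hVW
    have hval : restrictRel t V hV = restrictRel t W hW := congrArg Subtype.val hVW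
    have hresGE : ∀ (n : ℤ) (X : C), (V.ge n X ∧ InUN t X) ↔ (W.ge n X ∧ InUN t X) :=
      fun n X => iff_of_eq (congrFun (congrFun (congrArg RelTStructure.GE hval) n) X)
    obtain ⟨dV, mdV⟩ := distAtMost_of_lt_top hV
    obtain ⟨aV, bV, hV₁, hV₂⟩ := bounds_of_distAtMost mdV
    obtain ⟨dW, mdW⟩ := distAtMost_of_lt_top hW
    obtain ⟨aW, bW, hW₁, hW₂⟩ := bounds_of_distAtMost mdW
    have h0 : ∀ X : C, V.le 0 X ↔ W.le 0 X := fun X =>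
      ⟨LE_zero_sub t V W aW bV bW hV₂ hW₁ hW₂
        (fun Z hZ => ((hresGE 1 Z).mpr hZ).1) X,
       LE_zero_sub t W V aV bW bV hW₂ hV₁ hV₂
        (fun Z hZ => ((hresGE 1 Z).mp hZ).1) X⟩
    have hLE : V.le = W.le := by
      funext n X
      apply propext
      constructor
      · intro h
        exact leOfEq W (by ring) ((tLE_shift_iff W n 0 X).mpr
          ((h0 _).mp ((tLE_shift_iff V n 0 X).mp (leOfEq V (by ring) h))))
      · intro h
        exact leOfEq V (by ring) ((tLE_shift_iff V n 0 X).mpr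
          ((h0 _).mpr ((tLE_shift_iff W n 0 X).mp (leOfEq W (by ring) h))))
    have hGE : V.ge = W.ge := by
      funext n X
      apply propext
      constructor
      · intro h
        refine tGE_char W (fun Z hZ f => ?_)
        have hZ' : V.le (n - 1) Z := by rw [hLE]; exact hZ
        exact tzero V hZ' h (by omega) f
      · intro h
        refine tGE_char V (fun Z hZ f => ?_)
        have hZ' : W.le (n - 1) Z := by rw [← hLE]; exact hZ
        exact tzero W hZ' h (by omega) f
    exact Subtype.ext (tstructure_ext hLE hGE)
  · -- surjectivity
    rintro ⟨v, hv⟩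
    obtain ⟨d, hd⟩ := distAtMostRel_of_lt_top hv
    obtain ⟨a, b, hab, hLa, hLb⟩ := bounds_of_distAtMostRel hd
    have hdist : dist t (Vstruct t v a b hab hLa hLb) < ⊤ :=
      lt_top_of_distAtMost (Vstruct_dist t v a b hab hLa hLb)
    refine ⟨⟨Vstruct t v a b hab hLa hLb, hdist⟩, Subtype.ext (reltstructure_ext ?_ ?_)⟩
    · funext n X
      exact propext (Vstruct_resLE t v a b hab hLa hLb n X).symm
    · funext n X
      exact propext (Vstruct_resGE t v a b hab hLa hLb n X).symm

end TStructurePaper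
end
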